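/- arXiv:2208.01519 — 2 statements merged into one kernel-verified Lean document; each statement's English description precedes it below -/
import Mathlib

section
/- Let n ≥ 3 and let W be a 2-basic landmark system for HG(n,n,n;3). Then W is a resolving set if and only if W contains neither (F1) a forbidden 4-cycle, i.e., a permutation (i,j,k) of (1,2,3), values a ≠ b in [n], c,d ∈ [n], and four distinct landmarks w₁,w₂,w₃,w₄ with W_{i,a} = {w₁,w₂}, W_{i,b} = {w₃,w₄}, W_{j,c} = {w₂,w₃}, W_{k,d} = {w₁,w₄}; nor (F2) a forbidden 6-cycle, i.e., six distinct landmarks w₁,…,w₆ with (w₁)₁ = (w₂)₁, (w₄)₁ = (w₅)₁, (w₂)₂ = (w₃)₂, (w₅)₂ = (w₆)₂, (w₃)₃ = (w₄)₃, (w₆)₃ = (w₁)₃, and (w₁)₁ ≠ (w₄)₁, (w₂)₂ ≠ (w₅)₂, (w₃)₃ ≠ (w₆)₃. -/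
/-- The diagonal generalized Hamming graph `HG(n,n,n;3)`: adjacent iff the vertices
differ in all three coordinates. -/
def HG3 (n : ℕ) : SimpleGraph (Fin n × Fin n × Fin n) where
  Adj x y := x.1 ≠ y.1 ∧ x.2.1 ≠ y.2.1 ∧ x.2.2 ≠ y.2.2
  symm := ⟨fun x y h => ⟨h.1.symm, h.2.1.symm, h.2.2.symm⟩⟩
  loopless := ⟨fun x h => h.1 rfl⟩

/-- The `i`-th coordinate of a vertex, `i : Fin 3`. -/
def coord {n : ℕ} (i : Fin 3) (w : Fin n × Fin n × Fin n) : Fin n :=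
  if i = 0 then w.1 else if i = 1 then w.2.1 else w.2.2

/-- The block `W_{i,a}` of landmarks in `W` whose `i`-th coordinate equals `a`. -/
def block {n : ℕ} (W : Set (Fin n × Fin n × Fin n)) (i : Fin 3) (a : Fin n) :
    Set (Fin n × Fin n × Fin n) := {w ∈ W | coord i w = a}

/-- `W` is a resolving set for `HG(n,n,n;3)`. -/
def IsResolving {n : ℕ} (W : Set (Fin n × Fin n × Fin n)) : Prop :=
  ∀ x y : Fin n × Fin n × Fin n, x ∉ W → y ∉ W → x ≠ y →
    ∃ w ∈ W, (HG3 n).dist x w ≠ (HG3 n).dist y w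

/-- `W` is a 2-basic landmark system: every block has exactly two elements, and
blocks of different colors meet in at most one element. -/
def TwoBasic {n : ℕ} (W : Set (Fin n × Fin n × Fin n)) : Prop :=
  (∀ (i : Fin 3) (a : Fin n), (block W i a).ncard = 2) ∧
  (∀ i j : Fin 3, i < j → ∀ a b : Fin n, (block W i a ∩ block W j b).ncard ≤ 1)

/-- (F1) A forbidden 4-cycle: for some permutation `(i,j,k)` of the colors, two
disjoint blocks of color `i` together with a block of color `j` and one of color `k`
form a 4-cycle on four distinct landmarks. -/
def HasF1 {n : ℕ} (W : Set (Fin n × Fin n × Fin n)) : Prop :=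
  ∃ (σ : Equiv.Perm (Fin 3)) (a b c d : Fin n) (w₁ w₂ w₃ w₄ : Fin n × Fin n × Fin n),
    a ≠ b ∧ List.Pairwise (· ≠ ·) [w₁, w₂, w₃, w₄] ∧
    block W (σ 0) a = {w₁, w₂} ∧ block W (σ 0) b = {w₃, w₄} ∧
    block W (σ 1) c = {w₂, w₃} ∧ block W (σ 2) d = {w₁, w₄}

/-- (F2) A forbidden 6-cycle: six distinct landmarks whose consecutive coordinate
agreements follow the color pattern 1,2,3,1,2,3 with opposite edges of equal color. -/
def HasF2 {n : ℕ} (W : Set (Fin n × Fin n × Fin n)) : Prop :=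
  ∃ w₁ w₂ w₃ w₄ w₅ w₆ : Fin n × Fin n × Fin n,
    List.Pairwise (· ≠ ·) [w₁, w₂, w₃, w₄, w₅, w₆] ∧
    w₁ ∈ W ∧ w₂ ∈ W ∧ w₃ ∈ W ∧ w₄ ∈ W ∧ w₅ ∈ W ∧ w₆ ∈ W ∧
    w₁.1 = w₂.1 ∧ w₄.1 = w₅.1 ∧
    w₂.2.1 = w₃.2.1 ∧ w₅.2.1 = w₆.2.1 ∧
    w₃.2.2 = w₄.2.2 ∧ w₆.2.2 = w₁.2.2 ∧
    w₁.1 ≠ w₄.1 ∧ w₂.2.1 ≠ w₅.2.1 ∧ w₃.2.2 ≠ w₆.2.2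

/-- (F3) A rainbow triangle: three distinct landmarks pairwise sharing a coordinate,
one agreement in each coordinate. -/
def HasF3 {n : ℕ} (W : Set (Fin n × Fin n × Fin n)) : Prop :=
  ∃ w₁ w₂ w₃ : Fin n × Fin n × Fin n,
    List.Pairwise (· ≠ ·) [w₁, w₂, w₃] ∧
    w₁ ∈ W ∧ w₂ ∈ W ∧ w₃ ∈ W ∧
    w₁.1 = w₂.1 ∧ w₂.2.1 = w₃.2.1 ∧ w₃.2.2 = w₁.2.2

/- ---------------------------------------------------------------------------
   Auxiliary material
--------------------------------------------------------------------------- -/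

section SetHelpers
variable {V : Type*} [Finite V]

omit [Finite V] in
lemma pair_eq_of_ncard_two {s : Set V} {u v : V} (h : s.ncard = 2)
    (hu : u ∈ s) (hv : v ∈ s) (huv : u ≠ v) : s = {u, v} := by
  obtain ⟨a, b, hab, rfl⟩ := Set.ncard_eq_two.mp h
  rcases hu with rfl | rfl <;> rcases hv with rfl | rfl <;>
    first | exact absurd rfl huv | rfl | exact Set.pair_comm _ _

lemma eq_of_ncard_le_one {s : Set V} {u v : V} (h : s.ncard ≤ 1)
    (hu : u ∈ s) (hv : v ∈ s) : u = v :=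
  (Set.ncard_le_one (s.toFinite)).mp h u hu v hv

/-- If `A` has two elements, meets `D` and `D'` each in at most one element,
and `A ⊆ D ∪ D'`, then no element of `A` lies in both `D` and `D'`. -/
lemma aux1 {A D D' : Set V} {u : V} (hA : A.ncard = 2)
    (iD : (A ∩ D).ncard ≤ 1) (iD' : (A ∩ D').ncard ≤ 1)
    (c : A ⊆ D ∪ D') (huA : u ∈ A) (huD : u ∈ D) (huD' : u ∈ D') : False := by
  obtain ⟨a, b, hab, hAab⟩ := Set.ncard_eq_two.mp hA
  obtain ⟨r, hrA, hru⟩ : ∃ r, r ∈ A ∧ r ≠ u := by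
    subst hAab
    rcases huA with rfl | rfl
    · exact ⟨b, Or.inr rfl, fun h => hab h.symm⟩
    · exact ⟨a, Or.inl rfl, hab⟩
  rcases c hrA with hr | hr
  · exact hru (eq_of_ncard_le_one iD ⟨hrA, hr⟩ ⟨huA, huD⟩)
  · exact hru (eq_of_ncard_le_one iD' ⟨hrA, hr⟩ ⟨huA, huD'⟩)

/-- Splitting a 2-element block along a union: one element in each part. -/
lemma split2 {A D D' : Set V} (hA : A.ncard = 2)
    (iD : (A ∩ D).ncard ≤ 1) (iD' : (A ∩ D').ncard ≤ 1)
    (c : A ⊆ D ∪ D') :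
    ∃ p q, p ≠ q ∧ A = {p, q} ∧ p ∈ D ∧ q ∈ D' := by
  obtain ⟨a, b, hab, hAab⟩ := Set.ncard_eq_two.mp hA
  have haA : a ∈ A := hAab ▸ Or.inl rfl
  have hbA : b ∈ A := hAab ▸ Or.inr rfl
  rcases c haA with ha | ha
  · have hb : b ∈ D' := by
      rcases c hbA with hb | hb
      · exact absurd (eq_of_ncard_le_one iD ⟨haA, ha⟩ ⟨hbA, hb⟩) hab
      · exact hb
    exact ⟨a, b, hab, hAab, ha, hb⟩
  · have hb : b ∈ D := by
      rcases c hbA with hb | hb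
      · exact hb
      · exact absurd (eq_of_ncard_le_one iD' ⟨haA, ha⟩ ⟨hbA, hb⟩) hab
    exact ⟨b, a, hab.symm, hAab.trans (Set.pair_comm a b), hb, ha⟩

/-- The contradiction in the "two coordinates differ" case, at the level of sets. -/
lemma case2_false {A1 D1 A2 D2 C : Set V}
    (nA1 : A1.ncard = 2) (nD1 : D1.ncard = 2) (nA2 : A2.ncard = 2) (nC : C.ncard = 2)
    (iA1D2 : (A1 ∩ D2).ncard ≤ 1) (iA1C : (A1 ∩ C).ncard ≤ 1)
    (iD1A2 : (D1 ∩ A2).ncard ≤ 1) (iD1C : (D1 ∩ C).ncard ≤ 1)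
    (iA2D1 : (A2 ∩ D1).ncard ≤ 1) (iA2C : (A2 ∩ C).ncard ≤ 1)
    (cA1 : A1 ⊆ D2 ∪ C) (cD1 : D1 ⊆ A2 ∪ C) (cA2 : A2 ⊆ D1 ∪ C)
    (hdisj : ∀ w, w ∈ A1 → w ∈ D1 → False)
    (hx : ∀ w, w ∈ A1 → w ∈ A2 → w ∈ C → False) : False := by
  obtain ⟨p, q, hpq, hA1, hpD2, hqC⟩ := split2 nA1 iA1D2 iA1C cA1
  obtain ⟨p', q', hpq', hD1, hp'A2, hq'C⟩ := split2 nD1 iD1A2 iD1C cD1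
  obtain ⟨p'', q'', hpq'', hA2, hp''D1, hq''C⟩ := split2 nA2 iA2D1 iA2C cA2
  have hqA1 : q ∈ A1 := by rw [hA1]; exact Set.mem_insert_iff.mpr (Or.inr rfl)
  have hq'D1 : q' ∈ D1 := by rw [hD1]; exact Set.mem_insert_iff.mpr (Or.inr rfl)
  have hq''A2 : q'' ∈ A2 := by rw [hA2]; exact Set.mem_insert_iff.mpr (Or.inr rfl)
  have hne : q ≠ q' := fun h => hdisj q hqA1 (by rw [h]; exact hq'D1)
  have hCeq : C = {q, q'} := pair_eq_of_ncard_two nC hqC hq'C hne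
  have hmem : q'' = q ∨ q'' = q' := by
    have := hq''C
    rw [hCeq] at this
    exact this
  rcases hmem with h | h
  · exact hx q hqA1 (by rw [← h]; exact hq''A2) hqC
  · exact aux1 nD1 iD1A2 iD1C cD1 hq'D1 (by rw [← h]; exact hq''A2) hq'C

end SetHelpers

section CoordHelpers
variable {n : ℕ}

@[simp] lemma coord_zero (w : Fin n × Fin n × Fin n) : coord 0 w = w.1 := rfl
@[simp] lemma coord_one (w : Fin n × Fin n × Fin n) : coord 1 w = w.2.1 := rfl
@[simp] lemma coord_two (w : Fin n × Fin n × Fin n) : coord 2 w = w.2.2 := rfl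

lemma mem_block {W : Set (Fin n × Fin n × Fin n)} {i : Fin 3} {a : Fin n}
    {w : Fin n × Fin n × Fin n} : w ∈ block W i a ↔ w ∈ W ∧ coord i w = a := Iff.rfl

lemma triple_eq {w : Fin n × Fin n × Fin n} {a b c : Fin n}
    (h1 : w.1 = a) (h2 : w.2.1 = b) (h3 : w.2.2 = c) : w = (a, b, c) := by
  obtain ⟨u, v, t⟩ := w
  simp_all

/-- Sharing a coordinate. -/
def Shares (x w : Fin n × Fin n × Fin n) : Prop :=
  x.1 = w.1 ∨ x.2.1 = w.2.1 ∨ x.2.2 = w.2.2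

instance sharesDec (x w : Fin n × Fin n × Fin n) : Decidable (Shares x w) := by
  unfold Shares; infer_instance

lemma not_adj_iff_shares (x w : Fin n × Fin n × Fin n) :
    ¬ (HG3 n).Adj x w ↔ Shares x w := by
  simp only [HG3, Shares, not_and_or, not_not]

lemma exists_third (hn : 3 ≤ n) (a b : Fin n) :
    ∃ c : Fin n, c ≠ a ∧ c ≠ b := by
  by_contra h
  push_neg at h
  have hsub : (Finset.univ : Finset (Fin n)) ⊆ {a, b} := by
    intro c _
    rcases eq_or_ne c a with rfl | hca
    · simp
    · simp [h c hca]
  have := Finset.card_le_card hsub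
  simp [Finset.card_univ] at this
  have h2 : ({a, b} : Finset (Fin n)).card ≤ 2 :=
    Finset.card_insert_le _ _ |>.trans (by simp)
  omega

lemma dist_char (hn : 3 ≤ n) {x w : Fin n × Fin n × Fin n} (hxw : x ≠ w) :
    (HG3 n).dist x w = if Shares x w then 2 else 1 := by
  by_cases hs : Shares x w
  · simp only [hs, if_true]
    obtain ⟨c1, hc1⟩ := exists_third hn x.1 w.1
    obtain ⟨c2, hc2⟩ := exists_third hn x.2.1 w.2.1
    obtain ⟨c3, hc3⟩ := exists_third hn x.2.2 w.2.2
    have h1 : (HG3 n).Adj x (c1, c2, c3) :=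
      ⟨fun h => hc1.1 h.symm, fun h => hc2.1 h.symm, fun h => hc3.1 h.symm⟩
    have h2 : (HG3 n).Adj (c1, c2, c3) w := ⟨hc1.2, hc2.2, hc3.2⟩
    have hle : (HG3 n).dist x w ≤ 2 := by
      have := SimpleGraph.dist_le
        (SimpleGraph.Walk.cons h1 (SimpleGraph.Walk.cons h2 SimpleGraph.Walk.nil))
      simpa using this
    have h0 : (HG3 n).dist x w ≠ 0 := fun h => by
      rcases SimpleGraph.dist_eq_zero_iff_eq_or_not_reachable.mp h with h' | h'
      · exact hxw h'
      · exact h' ⟨SimpleGraph.Walk.cons h1 (SimpleGraph.Walk.cons h2 SimpleGraph.Walk.nil)⟩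
    have hne1 : (HG3 n).dist x w ≠ 1 := fun h =>
      (not_adj_iff_shares x w).mpr hs (SimpleGraph.dist_eq_one_iff_adj.mp h)
    omega
  · simp only [hs, if_false]
    rw [SimpleGraph.dist_eq_one_iff_adj]
    exact not_not.mp (fun h => hs ((not_adj_iff_shares x w).mp h))

lemma isResolving_iff (hn : 3 ≤ n) (W : Set (Fin n × Fin n × Fin n)) :
    IsResolving W ↔ ∀ x y : Fin n × Fin n × Fin n, x ∉ W → y ∉ W → x ≠ y →
      ∃ w ∈ W, ¬ (Shares x w ↔ Shares y w) := by
  unfold IsResolving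
  refine forall₂_congr fun x y => imp_congr_right fun hx => imp_congr_right fun hy =>
    imp_congr_right fun _ => exists_congr fun w => and_congr_right fun hw => ?_
  have hxw : x ≠ w := fun h => hx (h ▸ hw)
  have hyw : y ≠ w := fun h => hy (h ▸ hw)
  rw [dist_char hn hxw, dist_char hn hyw]
  by_cases h1 : Shares x w <;> by_cases h2 : Shares y w <;> simp [h1, h2]

end CoordHelpers

/- ---------------------------------------------------------------------------
   Building F1 from the block-level data
--------------------------------------------------------------------------- -/

lemma mkF1 {n : ℕ} {W : Set (Fin n × Fin n × Fin n)} (σ : Equiv.Perm (Fin 3))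
    (a b c d : Fin n) (hab : a ≠ b)
    (h2 : ∀ (i : Fin 3) (e : Fin n), (block W i e).ncard = 2)
    (hm : ∀ i j : Fin 3, i ≠ j → ∀ e f : Fin n,
      (block W i e ∩ block W j f).ncard ≤ 1)
    (cA : block W (σ 0) a ⊆ block W (σ 1) c ∪ block W (σ 2) d)
    (cB : block W (σ 0) b ⊆ block W (σ 1) c ∪ block W (σ 2) d) : HasF1 W := by
  have h01 : σ 0 ≠ σ 1 := fun h => absurd (σ.injective h) (by decide)
  have h02 : σ 0 ≠ σ 2 := fun h => absurd (σ.injective h) (by decide)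
  have h12 : σ 1 ≠ σ 2 := fun h => absurd (σ.injective h) (by decide)
  obtain ⟨w2, w1, h21, hA, hw2c, hw1d⟩ :=
    split2 (h2 (σ 0) a) (hm _ _ h01 a c) (hm _ _ h02 a d) cA
  obtain ⟨w3, w4, h34, hB, hw3c, hw4d⟩ :=
    split2 (h2 (σ 0) b) (hm _ _ h01 b c) (hm _ _ h02 b d) cB
  have mw1A : w1 ∈ block W (σ 0) a := by
    rw [hA]; exact Set.mem_insert_iff.mpr (Or.inr rfl)
  have mw2A : w2 ∈ block W (σ 0) a := by rw [hA]; exact Set.mem_insert _ _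
  have mw3B : w3 ∈ block W (σ 0) b := by rw [hB]; exact Set.mem_insert _ _
  have mw4B : w4 ∈ block W (σ 0) b := by
    rw [hB]; exact Set.mem_insert_iff.mpr (Or.inr rfl)
  have cross : ∀ u v : Fin n × Fin n × Fin n,
      u ∈ block W (σ 0) a → v ∈ block W (σ 0) b → u ≠ v := by
    rintro u v hu hv rfl
    exact hab (hu.2.symm.trans hv.2)
  have h13 : w1 ≠ w3 := cross _ _ mw1A mw3B
  have h14 : w1 ≠ w4 := cross _ _ mw1A mw4B
  have h23 : w2 ≠ w3 := cross _ _ mw2A mw3B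
  have h24 : w2 ≠ w4 := cross _ _ mw2A mw4B
  have hCc : block W (σ 1) c = {w2, w3} :=
    pair_eq_of_ncard_two (h2 (σ 1) c) hw2c hw3c h23
  have hDd : block W (σ 2) d = {w1, w4} :=
    pair_eq_of_ncard_two (h2 (σ 2) d) hw1d hw4d h14
  refine ⟨σ, a, b, c, d, w1, w2, w3, w4, hab, ?_, ?_, hB, hCc, hDd⟩
  · have h12' : w1 ≠ w2 := h21.symm
    simp_all [List.pairwise_cons]
  · rw [hA]; exact Set.pair_comm w2 w1

/- ---------------------------------------------------------------------------
   Shares and exists-coordinate form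
--------------------------------------------------------------------------- -/

lemma fin3_cases (j : Fin 3) : j = 0 ∨ j = 1 ∨ j = 2 := by revert j; decide

lemma shares_iff_exists {n : ℕ} (x w : Fin n × Fin n × Fin n) :
    Shares x w ↔ ∃ i : Fin 3, coord i x = coord i w := by
  constructor
  · rintro (h | h | h)
    exacts [⟨0, h⟩, ⟨1, h⟩, ⟨2, h⟩]
  · rintro ⟨i, h⟩
    rcases fin3_cases i with rfl | rfl | rfl
    · exact Or.inl h
    · exact Or.inr (Or.inl h)
    · exact Or.inr (Or.inr h)

lemma shares_perm_iff {n : ℕ} (σ : Equiv.Perm (Fin 3)) (x w : Fin n × Fin n × Fin n) :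
    Shares x w ↔ (coord (σ 0) x = coord (σ 0) w ∨ coord (σ 1) x = coord (σ 1) w ∨
      coord (σ 2) x = coord (σ 2) w) := by
  rw [shares_iff_exists]
  constructor
  · rintro ⟨i, h⟩
    obtain ⟨j, rfl⟩ := σ.surjective i
    rcases fin3_cases j with rfl | rfl | rfl
    · exact Or.inl h
    · exact Or.inr (Or.inl h)
    · exact Or.inr (Or.inr h)
  · rintro (h | h | h)
    exacts [⟨_, h⟩, ⟨_, h⟩, ⟨_, h⟩]

lemma coord_triple {n : ℕ} (g : Fin 3 → Fin n) (i : Fin 3) :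
    coord i (g 0, g 1, g 2) = g i := by
  rcases fin3_cases i with rfl | rfl | rfl <;> rfl

lemma exists_vertex {n : ℕ} (σ : Equiv.Perm (Fin 3)) (a c d : Fin n) :
    ∃ v : Fin n × Fin n × Fin n,
      coord (σ 0) v = a ∧ coord (σ 1) v = c ∧ coord (σ 2) v = d := by
  have n10 : σ 1 ≠ σ 0 := σ.injective.ne (by decide)
  have n20 : σ 2 ≠ σ 0 := σ.injective.ne (by decide)
  have n21 : σ 2 ≠ σ 1 := σ.injective.ne (by decide)
  set g : Fin 3 → Fin n := fun i => if i = σ 0 then a else if i = σ 1 then c else d with hg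
  refine ⟨(g 0, g 1, g 2), ?_, ?_, ?_⟩ <;> rw [coord_triple] <;>
    simp [hg, n10, n20, n21]

/- ---------------------------------------------------------------------------
   F1 gives an unresolved pair
--------------------------------------------------------------------------- -/

lemma unresolved_of_F1 {n : ℕ} {W : Set (Fin n × Fin n × Fin n)} (hF : HasF1 W) :
    ∃ x y : Fin n × Fin n × Fin n, x ∉ W ∧ y ∉ W ∧ x ≠ y ∧
      ∀ w ∈ W, (Shares x w ↔ Shares y w) := by
  obtain ⟨σ, a, b, c, d, w1, w2, w3, w4, hab, hp, hBa, hBb, hBc, hBd⟩ := hF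
  rcases hp with _ | ⟨h1, hp⟩
  rcases hp with _ | ⟨h2, hp⟩
  rcases hp with _ | ⟨h3, _⟩
  have h12 : w1 ≠ w2 := h1 w2 (by simp)
  have h13 : w1 ≠ w3 := h1 w3 (by simp)
  have h14 : w1 ≠ w4 := h1 w4 (by simp)
  have h23 : w2 ≠ w3 := h2 w3 (by simp)
  have h24 : w2 ≠ w4 := h2 w4 (by simp)
  have h34 : w3 ≠ w4 := h3 w4 (by simp)
  obtain ⟨x, hxa, hxc, hxd⟩ := exists_vertex σ a c d
  obtain ⟨y, hya, hyc, hyd⟩ := exists_vertex σ b c d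
  have mw1a : w1 ∈ block W (σ 0) a := by rw [hBa]; exact Set.mem_insert _ _
  have mw2a : w2 ∈ block W (σ 0) a := by
    rw [hBa]; exact Set.mem_insert_iff.mpr (Or.inr rfl)
  have mw3b : w3 ∈ block W (σ 0) b := by rw [hBb]; exact Set.mem_insert _ _
  have mw4b : w4 ∈ block W (σ 0) b := by
    rw [hBb]; exact Set.mem_insert_iff.mpr (Or.inr rfl)
  have mw2c : w2 ∈ block W (σ 1) c := by rw [hBc]; exact Set.mem_insert _ _
  have mw3c : w3 ∈ block W (σ 1) c := by
    rw [hBc]; exact Set.mem_insert_iff.mpr (Or.inr rfl)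
  have mw1d : w1 ∈ block W (σ 2) d := by rw [hBd]; exact Set.mem_insert _ _
  have mw4d : w4 ∈ block W (σ 2) d := by
    rw [hBd]; exact Set.mem_insert_iff.mpr (Or.inr rfl)
  have hSx : ∀ w ∈ W, (Shares x w ↔ (w = w1 ∨ w = w2 ∨ w = w3 ∨ w = w4)) := by
    intro w hwW
    rw [shares_perm_iff σ]
    constructor
    · rintro (h | h | h)
      · rw [hxa] at h
        have hmem : w ∈ block W (σ 0) a := ⟨hwW, h.symm⟩
        rw [hBa] at hmem
        rcases hmem with h' | h'
        · exact Or.inl h'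
        · exact Or.inr (Or.inl h')
      · rw [hxc] at h
        have hmem : w ∈ block W (σ 1) c := ⟨hwW, h.symm⟩
        rw [hBc] at hmem
        rcases hmem with h' | h'
        · exact Or.inr (Or.inl h')
        · exact Or.inr (Or.inr (Or.inl h'))
      · rw [hxd] at h
        have hmem : w ∈ block W (σ 2) d := ⟨hwW, h.symm⟩
        rw [hBd] at hmem
        rcases hmem with h' | h'
        · exact Or.inl h'
        · exact Or.inr (Or.inr (Or.inr h'))
    · rintro (rfl | rfl | rfl | rfl)
      · exact Or.inl (hxa.trans mw1a.2.symm)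
      · exact Or.inl (hxa.trans mw2a.2.symm)
      · exact Or.inr (Or.inl (hxc.trans mw3c.2.symm))
      · exact Or.inr (Or.inr (hxd.trans mw4d.2.symm))
  have hSy : ∀ w ∈ W, (Shares y w ↔ (w = w1 ∨ w = w2 ∨ w = w3 ∨ w = w4)) := by
    intro w hwW
    rw [shares_perm_iff σ]
    constructor
    · rintro (h | h | h)
      · rw [hya] at h
        have hmem : w ∈ block W (σ 0) b := ⟨hwW, h.symm⟩
        rw [hBb] at hmem
        rcases hmem with h' | h'
        · exact Or.inr (Or.inr (Or.inl h'))
        · exact Or.inr (Or.inr (Or.inr h'))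
      · rw [hyc] at h
        have hmem : w ∈ block W (σ 1) c := ⟨hwW, h.symm⟩
        rw [hBc] at hmem
        rcases hmem with h' | h'
        · exact Or.inr (Or.inl h')
        · exact Or.inr (Or.inr (Or.inl h'))
      · rw [hyd] at h
        have hmem : w ∈ block W (σ 2) d := ⟨hwW, h.symm⟩
        rw [hBd] at hmem
        rcases hmem with h' | h'
        · exact Or.inl h'
        · exact Or.inr (Or.inr (Or.inr h'))
    · rintro (rfl | rfl | rfl | rfl)
      · exact Or.inr (Or.inr (hyd.trans mw1d.2.symm))
      · exact Or.inr (Or.inl (hyc.trans mw2c.2.symm))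
      · exact Or.inl (hya.trans mw3b.2.symm)
      · exact Or.inl (hya.trans mw4b.2.symm)
  refine ⟨x, y, ?_, ?_, ?_, fun w hw => (hSx w hw).trans (hSy w hw).symm⟩
  · intro hxW
    have m1 : x ∈ block W (σ 0) a := ⟨hxW, hxa⟩
    have m2 : x ∈ block W (σ 1) c := ⟨hxW, hxc⟩
    have m3 : x ∈ block W (σ 2) d := ⟨hxW, hxd⟩
    rw [hBa] at m1; rw [hBc] at m2; rw [hBd] at m3
    rcases m1 with h | h
    · rcases m2 with h' | h'
      · exact h12 (h.symm.trans h')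
      · exact h13 (h.symm.trans h')
    · rcases m3 with h' | h'
      · exact h12 (h'.symm.trans h)
      · exact h24 (h.symm.trans h')
  · intro hyW
    have m1 : y ∈ block W (σ 0) b := ⟨hyW, hya⟩
    have m2 : y ∈ block W (σ 1) c := ⟨hyW, hyc⟩
    have m3 : y ∈ block W (σ 2) d := ⟨hyW, hyd⟩
    rw [hBb] at m1; rw [hBc] at m2; rw [hBd] at m3
    rcases m1 with h | h
    · rcases m3 with h' | h'
      · exact h13 (h'.symm.trans h)
      · exact h34 (h.symm.trans h')
    · rcases m2 with h' | h'
      · exact h24 (h'.symm.trans h)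
      · exact h34 (h'.symm.trans h)
  · intro h
    rw [h] at hxa
    exact hab (hxa.symm.trans hya)

/- ---------------------------------------------------------------------------
   F2 gives an unresolved pair
--------------------------------------------------------------------------- -/

lemma unresolved_of_F2 {n : ℕ} {W : Set (Fin n × Fin n × Fin n)}
    (h2 : ∀ (i : Fin 3) (a : Fin n), (block W i a).ncard = 2) (hF : HasF2 W) :
    ∃ x y : Fin n × Fin n × Fin n, x ∉ W ∧ y ∉ W ∧ x ≠ y ∧
      ∀ w ∈ W, (Shares x w ↔ Shares y w) := by
  obtain ⟨w1, w2, w3, w4, w5, w6, hp, m1, m2, m3, m4, m5, m6,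
    e12, e45, e23, e56, e34, e61, n14, n25, n36⟩ := hF
  rcases hp with _ | ⟨p1, hp⟩
  rcases hp with _ | ⟨p2, hp⟩
  rcases hp with _ | ⟨p3, hp⟩
  rcases hp with _ | ⟨p4, hp⟩
  rcases hp with _ | ⟨p5, _⟩
  have h12 : w1 ≠ w2 := p1 w2 (by simp)
  have h15 : w1 ≠ w5 := p1 w5 (by simp)
  have h16 : w1 ≠ w6 := p1 w6 (by simp)
  have h23 : w2 ≠ w3 := p2 w3 (by simp)
  have h24 : w2 ≠ w4 := p2 w4 (by simp)
  have h25 : w2 ≠ w5 := p2 w5 (by simp)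
  have h26 : w2 ≠ w6 := p2 w6 (by simp)
  have h34 : w3 ≠ w4 := p3 w4 (by simp)
  have h35 : w3 ≠ w5 := p3 w5 (by simp)
  have h45 : w4 ≠ w5 := p4 w5 (by simp)
  have h56 : w5 ≠ w6 := p5 w6 (by simp)
  have h61 : w6 ≠ w1 := h16.symm
  have bx1 : block W 0 w1.1 = {w1, w2} :=
    pair_eq_of_ncard_two (h2 0 w1.1) ⟨m1, rfl⟩ ⟨m2, e12.symm⟩ h12
  have bx2 : block W 1 w5.2.1 = {w5, w6} :=
    pair_eq_of_ncard_two (h2 1 w5.2.1) ⟨m5, rfl⟩ ⟨m6, e56.symm⟩ h56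
  have bx3 : block W 2 w3.2.2 = {w3, w4} :=
    pair_eq_of_ncard_two (h2 2 w3.2.2) ⟨m3, rfl⟩ ⟨m4, e34.symm⟩ h34
  have by1 : block W 0 w4.1 = {w4, w5} :=
    pair_eq_of_ncard_two (h2 0 w4.1) ⟨m4, rfl⟩ ⟨m5, e45.symm⟩ h45
  have by2 : block W 1 w2.2.1 = {w2, w3} :=
    pair_eq_of_ncard_two (h2 1 w2.2.1) ⟨m2, rfl⟩ ⟨m3, e23.symm⟩ h23
  have by3 : block W 2 w6.2.2 = {w6, w1} :=
    pair_eq_of_ncard_two (h2 2 w6.2.2) ⟨m6, rfl⟩ ⟨m1, e61.symm⟩ h61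
  obtain ⟨x, hx1, hx2, hx3⟩ :
      ∃ v : Fin n × Fin n × Fin n, v.1 = w1.1 ∧ v.2.1 = w5.2.1 ∧ v.2.2 = w3.2.2 :=
    ⟨(w1.1, w5.2.1, w3.2.2), rfl, rfl, rfl⟩
  obtain ⟨y, hy1, hy2, hy3⟩ :
      ∃ v : Fin n × Fin n × Fin n, v.1 = w4.1 ∧ v.2.1 = w2.2.1 ∧ v.2.2 = w6.2.2 :=
    ⟨(w4.1, w2.2.1, w6.2.2), rfl, rfl, rfl⟩
  have hSx : ∀ w ∈ W, (Shares x w ↔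
      (w = w1 ∨ w = w2 ∨ w = w3 ∨ w = w4 ∨ w = w5 ∨ w = w6)) := by
    intro w hwW
    constructor
    · rintro (h | h | h)
      · rw [hx1] at h
        have hmem : w ∈ block W 0 w1.1 := ⟨hwW, h.symm⟩
        rw [bx1] at hmem
        rcases hmem with h' | h'
        · exact Or.inl h'
        · exact Or.inr (Or.inl h')
      · rw [hx2] at h
        have hmem : w ∈ block W 1 w5.2.1 := ⟨hwW, h.symm⟩
        rw [bx2] at hmem
        rcases hmem with h' | h'
        · exact Or.inr (Or.inr (Or.inr (Or.inr (Or.inl h'))))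
        · exact Or.inr (Or.inr (Or.inr (Or.inr (Or.inr h'))))
      · rw [hx3] at h
        have hmem : w ∈ block W 2 w3.2.2 := ⟨hwW, h.symm⟩
        rw [bx3] at hmem
        rcases hmem with h' | h'
        · exact Or.inr (Or.inr (Or.inl h'))
        · exact Or.inr (Or.inr (Or.inr (Or.inl h')))
    · rintro (rfl | rfl | rfl | rfl | rfl | rfl)
      · exact Or.inl hx1
      · exact Or.inl (hx1.trans e12)
      · exact Or.inr (Or.inr hx3)
      · exact Or.inr (Or.inr (hx3.trans e34))
      · exact Or.inr (Or.inl hx2)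
      · exact Or.inr (Or.inl (hx2.trans e56))
  have hSy : ∀ w ∈ W, (Shares y w ↔
      (w = w1 ∨ w = w2 ∨ w = w3 ∨ w = w4 ∨ w = w5 ∨ w = w6)) := by
    intro w hwW
    constructor
    · rintro (h | h | h)
      · rw [hy1] at h
        have hmem : w ∈ block W 0 w4.1 := ⟨hwW, h.symm⟩
        rw [by1] at hmem
        rcases hmem with h' | h'
        · exact Or.inr (Or.inr (Or.inr (Or.inl h')))
        · exact Or.inr (Or.inr (Or.inr (Or.inr (Or.inl h'))))
      · rw [hy2] at h
        have hmem : w ∈ block W 1 w2.2.1 := ⟨hwW, h.symm⟩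
        rw [by2] at hmem
        rcases hmem with h' | h'
        · exact Or.inr (Or.inl h')
        · exact Or.inr (Or.inr (Or.inl h'))
      · rw [hy3] at h
        have hmem : w ∈ block W 2 w6.2.2 := ⟨hwW, h.symm⟩
        rw [by3] at hmem
        rcases hmem with h' | h'
        · exact Or.inr (Or.inr (Or.inr (Or.inr (Or.inr h'))))
        · exact Or.inl h'
    · rintro (rfl | rfl | rfl | rfl | rfl | rfl)
      · exact Or.inr (Or.inr (hy3.trans e61))
      · exact Or.inr (Or.inl hy2)
      · exact Or.inr (Or.inl (hy2.trans e23))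
      · exact Or.inl hy1
      · exact Or.inl (hy1.trans e45)
      · exact Or.inr (Or.inr hy3)
  refine ⟨x, y, ?_, ?_, ?_, fun w hw => (hSx w hw).trans (hSy w hw).symm⟩
  · intro hxW
    have mm1 : x ∈ block W 0 w1.1 := ⟨hxW, hx1⟩
    have mm2 : x ∈ block W 1 w5.2.1 := ⟨hxW, hx2⟩
    rw [bx1] at mm1; rw [bx2] at mm2
    rcases mm1 with h | h <;> rcases mm2 with h' | h'
    · exact h15 (h.symm.trans h')
    · exact h16 (h.symm.trans h')
    · exact h25 (h.symm.trans h')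
    · exact h26 (h.symm.trans h')
  · intro hyW
    have mm1 : y ∈ block W 0 w4.1 := ⟨hyW, hy1⟩
    have mm2 : y ∈ block W 1 w2.2.1 := ⟨hyW, hy2⟩
    rw [by1] at mm1; rw [by2] at mm2
    rcases mm1 with h | h <;> rcases mm2 with h' | h'
    · exact h24 (h'.symm.trans h)
    · exact h34 (h'.symm.trans h)
    · exact h25 (h'.symm.trans h)
    · exact h35 (h'.symm.trans h)
  · intro h
    exact n14 (hx1.symm.trans ((congrArg Prod.fst h).trans hy1))

/- ---------------------------------------------------------------------------
   The key combinatorial lemma: an unresolved pair forces F1 or F2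
--------------------------------------------------------------------------- -/

lemma pairwise6 {α : Type*} {a b c d e f : α}
    (h1 : a ≠ b) (h2 : a ≠ c) (h3 : a ≠ d) (h4 : a ≠ e) (h5 : a ≠ f)
    (h6 : b ≠ c) (h7 : b ≠ d) (h8 : b ≠ e) (h9 : b ≠ f)
    (h10 : c ≠ d) (h11 : c ≠ e) (h12 : c ≠ f)
    (h13 : d ≠ e) (h14 : d ≠ f) (h15 : e ≠ f) :
    List.Pairwise (· ≠ ·) [a, b, c, d, e, f] := by
  simp_all [List.pairwise_cons]

def σ102 : Equiv.Perm (Fin 3) := Equiv.swap 0 1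
def σ210 : Equiv.Perm (Fin 3) := Equiv.swap 0 2

lemma key {n : ℕ} {W : Set (Fin n × Fin n × Fin n)} (hW : TwoBasic W)
    {x y : Fin n × Fin n × Fin n} (hx : x ∉ W) (hy : y ∉ W) (hxy : x ≠ y)
    (H : ∀ w ∈ W, Shares x w ↔ Shares y w) : HasF1 W ∨ HasF2 W := by
  obtain ⟨h2, hmlt⟩ := hW
  have hm : ∀ i j : Fin 3, i ≠ j → ∀ e f : Fin n,
      (block W i e ∩ block W j f).ncard ≤ 1 := by
    intro i j hij e f
    rcases lt_or_gt_of_ne hij with h | h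
    · exact hmlt i j h e f
    · rw [Set.inter_comm]; exact hmlt j i h f e
  obtain ⟨x1, x2, x3⟩ := x
  obtain ⟨y1, y2, y3⟩ := y
  simp only [Shares] at H
  by_cases e1 : x1 = y1 <;> by_cases e2 : x2 = y2 <;> by_cases e3 : x3 = y3
  -- case: all coordinates equal (contradiction)
  · exact absurd (by rw [e1, e2, e3]) hxy
  -- case: only coordinate 3 differs → F1 with σ210
  · subst e1; subst e2
    have cA : block W 2 x3 ⊆ block W 1 x2 ∪ block W 0 x1 := by
      rintro w ⟨hwW, hw3⟩
      rcases (H w hwW).mp (Or.inr (Or.inr hw3.symm)) with h | h | h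
      · exact Or.inr ⟨hwW, h.symm⟩
      · exact Or.inl ⟨hwW, h.symm⟩
      · exact absurd ((h.trans hw3).symm) e3
    have cB : block W 2 y3 ⊆ block W 1 x2 ∪ block W 0 x1 := by
      rintro w ⟨hwW, hw3⟩
      rcases (H w hwW).mpr (Or.inr (Or.inr hw3.symm)) with h | h | h
      · exact Or.inr ⟨hwW, h.symm⟩
      · exact Or.inl ⟨hwW, h.symm⟩
      · exact absurd (h.trans hw3) e3
    have hσ0 : σ210 0 = 2 := by decide
    have hσ1 : σ210 1 = 1 := by decide
    have hσ2 : σ210 2 = 0 := by decide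
    refine Or.inl (mkF1 σ210 x3 y3 x2 x1 e3 h2 hm ?_ ?_) <;>
      rw [hσ0, hσ1, hσ2]
    · exact cA
    · exact cB
  -- case: only coordinate 2 differs → F1 with σ102
  · subst e1; subst e3
    have cA : block W 1 x2 ⊆ block W 0 x1 ∪ block W 2 x3 := by
      rintro w ⟨hwW, hw2⟩
      rcases (H w hwW).mp (Or.inr (Or.inl hw2.symm)) with h | h | h
      · exact Or.inl ⟨hwW, h.symm⟩
      · exact absurd ((h.trans hw2).symm) e2
      · exact Or.inr ⟨hwW, h.symm⟩
    have cB : block W 1 y2 ⊆ block W 0 x1 ∪ block W 2 x3 := by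
      rintro w ⟨hwW, hw2⟩
      rcases (H w hwW).mpr (Or.inr (Or.inl hw2.symm)) with h | h | h
      · exact Or.inl ⟨hwW, h.symm⟩
      · exact absurd (h.trans hw2) e2
      · exact Or.inr ⟨hwW, h.symm⟩
    have hσ0 : σ102 0 = 1 := by decide
    have hσ1 : σ102 1 = 0 := by decide
    have hσ2 : σ102 2 = 2 := by decide
    refine Or.inl (mkF1 σ102 x2 y2 x1 x3 e2 h2 hm ?_ ?_) <;>
      rw [hσ0, hσ1, hσ2]
    · exact cA
    · exact cB
  -- case: coordinates 2 and 3 differ (contradiction)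
  · subst e1
    have cA1 : block W 1 x2 ⊆ block W 2 y3 ∪ block W 0 x1 := by
      rintro w ⟨hwW, hw⟩
      rcases (H w hwW).mp (Or.inr (Or.inl hw.symm)) with h | h | h
      · exact Or.inr ⟨hwW, h.symm⟩
      · exact absurd ((h.trans hw).symm) e2
      · exact Or.inl ⟨hwW, h.symm⟩
    have cD1 : block W 1 y2 ⊆ block W 2 x3 ∪ block W 0 x1 := by
      rintro w ⟨hwW, hw⟩
      rcases (H w hwW).mpr (Or.inr (Or.inl hw.symm)) with h | h | h
      · exact Or.inr ⟨hwW, h.symm⟩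
      · exact absurd (h.trans hw) e2
      · exact Or.inl ⟨hwW, h.symm⟩
    have cA2 : block W 2 x3 ⊆ block W 1 y2 ∪ block W 0 x1 := by
      rintro w ⟨hwW, hw⟩
      rcases (H w hwW).mp (Or.inr (Or.inr hw.symm)) with h | h | h
      · exact Or.inr ⟨hwW, h.symm⟩
      · exact Or.inl ⟨hwW, h.symm⟩
      · exact absurd ((h.trans hw).symm) e3
    exact absurd (case2_false (h2 1 x2) (h2 1 y2) (h2 2 x3) (h2 0 x1)
      (hm 1 2 (by decide) x2 y3) (hm 1 0 (by decide) x2 x1)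
      (hm 1 2 (by decide) y2 x3) (hm 1 0 (by decide) y2 x1)
      (hm 2 1 (by decide) x3 y2) (hm 2 0 (by decide) x3 x1)
      cA1 cD1 cA2
      (fun w h h' => e2 (h.2.symm.trans h'.2))
      (fun w hA hB hC => hx (by
        rw [← triple_eq hC.2 hA.2 hB.2]; exact hA.1))) not_false
  -- case: only coordinate 1 differs → F1 with σ = 1
  · subst e2; subst e3
    have cA : block W 0 x1 ⊆ block W 1 x2 ∪ block W 2 x3 := by
      rintro w ⟨hwW, hw1⟩
      rcases (H w hwW).mp (Or.inl hw1.symm) with h | h | h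
      · exact absurd ((h.trans hw1).symm) e1
      · exact Or.inl ⟨hwW, h.symm⟩
      · exact Or.inr ⟨hwW, h.symm⟩
    have cB : block W 0 y1 ⊆ block W 1 x2 ∪ block W 2 x3 := by
      rintro w ⟨hwW, hw1⟩
      rcases (H w hwW).mpr (Or.inl hw1.symm) with h | h | h
      · exact absurd (h.trans hw1) e1
      · exact Or.inl ⟨hwW, h.symm⟩
      · exact Or.inr ⟨hwW, h.symm⟩
    exact Or.inl (mkF1 1 x1 y1 x2 x3 e1 h2 hm cA cB)
  -- case: coordinates 1 and 3 differ (contradiction)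
  · subst e2
    have cA1 : block W 0 x1 ⊆ block W 2 y3 ∪ block W 1 x2 := by
      rintro w ⟨hwW, hw⟩
      rcases (H w hwW).mp (Or.inl hw.symm) with h | h | h
      · exact absurd ((h.trans hw).symm) e1
      · exact Or.inr ⟨hwW, h.symm⟩
      · exact Or.inl ⟨hwW, h.symm⟩
    have cD1 : block W 0 y1 ⊆ block W 2 x3 ∪ block W 1 x2 := by
      rintro w ⟨hwW, hw⟩
      rcases (H w hwW).mpr (Or.inl hw.symm) with h | h | h
      · exact absurd (h.trans hw) e1
      · exact Or.inr ⟨hwW, h.symm⟩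
      · exact Or.inl ⟨hwW, h.symm⟩
    have cA2 : block W 2 x3 ⊆ block W 0 y1 ∪ block W 1 x2 := by
      rintro w ⟨hwW, hw⟩
      rcases (H w hwW).mp (Or.inr (Or.inr hw.symm)) with h | h | h
      · exact Or.inl ⟨hwW, h.symm⟩
      · exact Or.inr ⟨hwW, h.symm⟩
      · exact absurd ((h.trans hw).symm) e3
    exact absurd (case2_false (h2 0 x1) (h2 0 y1) (h2 2 x3) (h2 1 x2)
      (hm 0 2 (by decide) x1 y3) (hm 0 1 (by decide) x1 x2)
      (hm 0 2 (by decide) y1 x3) (hm 0 1 (by decide) y1 x2)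
      (hm 2 0 (by decide) x3 y1) (hm 2 1 (by decide) x3 x2)
      cA1 cD1 cA2
      (fun w h h' => e1 (h.2.symm.trans h'.2))
      (fun w hA hB hC => hx (by
        rw [← triple_eq hA.2 hC.2 hB.2]; exact hA.1))) not_false
  -- case: coordinates 1 and 2 differ (contradiction)
  · subst e3
    have cA1 : block W 0 x1 ⊆ block W 1 y2 ∪ block W 2 x3 := by
      rintro w ⟨hwW, hw⟩
      rcases (H w hwW).mp (Or.inl hw.symm) with h | h | h
      · exact absurd ((h.trans hw).symm) e1
      · exact Or.inl ⟨hwW, h.symm⟩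
      · exact Or.inr ⟨hwW, h.symm⟩
    have cD1 : block W 0 y1 ⊆ block W 1 x2 ∪ block W 2 x3 := by
      rintro w ⟨hwW, hw⟩
      rcases (H w hwW).mpr (Or.inl hw.symm) with h | h | h
      · exact absurd (h.trans hw) e1
      · exact Or.inl ⟨hwW, h.symm⟩
      · exact Or.inr ⟨hwW, h.symm⟩
    have cA2 : block W 1 x2 ⊆ block W 0 y1 ∪ block W 2 x3 := by
      rintro w ⟨hwW, hw⟩
      rcases (H w hwW).mp (Or.inr (Or.inl hw.symm)) with h | h | h
      · exact Or.inl ⟨hwW, h.symm⟩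
      · exact absurd ((h.trans hw).symm) e2
      · exact Or.inr ⟨hwW, h.symm⟩
    exact absurd (case2_false (h2 0 x1) (h2 0 y1) (h2 1 x2) (h2 2 x3)
      (hm 0 1 (by decide) x1 y2) (hm 0 2 (by decide) x1 x3)
      (hm 0 1 (by decide) y1 x2) (hm 0 2 (by decide) y1 x3)
      (hm 1 0 (by decide) x2 y1) (hm 1 2 (by decide) x2 x3)
      cA1 cD1 cA2
      (fun w h h' => e1 (h.2.symm.trans h'.2))
      (fun w hA hB hC => hx (by
        rw [← triple_eq hA.2 hB.2 hC.2]; exact hA.1))) not_false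
  -- case: all coordinates differ → F2
  · -- the six containments
    have cA1 : block W 0 x1 ⊆ block W 1 y2 ∪ block W 2 y3 := by
      rintro w ⟨hwW, hw⟩
      rcases (H w hwW).mp (Or.inl hw.symm) with h | h | h
      · exact absurd ((h.trans hw).symm) e1
      · exact Or.inl ⟨hwW, h.symm⟩
      · exact Or.inr ⟨hwW, h.symm⟩
    have cA2 : block W 1 x2 ⊆ block W 0 y1 ∪ block W 2 y3 := by
      rintro w ⟨hwW, hw⟩
      rcases (H w hwW).mp (Or.inr (Or.inl hw.symm)) with h | h | h
      · exact Or.inl ⟨hwW, h.symm⟩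
      · exact absurd ((h.trans hw).symm) e2
      · exact Or.inr ⟨hwW, h.symm⟩
    have cA3 : block W 2 x3 ⊆ block W 0 y1 ∪ block W 1 y2 := by
      rintro w ⟨hwW, hw⟩
      rcases (H w hwW).mp (Or.inr (Or.inr hw.symm)) with h | h | h
      · exact Or.inl ⟨hwW, h.symm⟩
      · exact Or.inr ⟨hwW, h.symm⟩
      · exact absurd ((h.trans hw).symm) e3
    have cD1 : block W 0 y1 ⊆ block W 1 x2 ∪ block W 2 x3 := by
      rintro w ⟨hwW, hw⟩
      rcases (H w hwW).mpr (Or.inl hw.symm) with h | h | h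
      · exact absurd (h.trans hw) e1
      · exact Or.inl ⟨hwW, h.symm⟩
      · exact Or.inr ⟨hwW, h.symm⟩
    have cD2 : block W 1 y2 ⊆ block W 0 x1 ∪ block W 2 x3 := by
      rintro w ⟨hwW, hw⟩
      rcases (H w hwW).mpr (Or.inr (Or.inl hw.symm)) with h | h | h
      · exact Or.inl ⟨hwW, h.symm⟩
      · exact absurd (h.trans hw) e2
      · exact Or.inr ⟨hwW, h.symm⟩
    have cD3 : block W 2 y3 ⊆ block W 0 x1 ∪ block W 1 x2 := by
      rintro w ⟨hwW, hw⟩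
      rcases (H w hwW).mpr (Or.inr (Or.inr hw.symm)) with h | h | h
      · exact Or.inl ⟨hwW, h.symm⟩
      · exact Or.inr ⟨hwW, h.symm⟩
      · exact absurd (h.trans hw) e3
    -- split the three x-blocks
    obtain ⟨w2, w1, h21, hA1, w2D2, w1D3⟩ :=
      split2 (h2 0 x1) (hm 0 1 (by decide) x1 y2) (hm 0 2 (by decide) x1 y3) cA1
    obtain ⟨w5, w6, h56, hA2, w5D1, w6D3⟩ :=
      split2 (h2 1 x2) (hm 1 0 (by decide) x2 y1) (hm 1 2 (by decide) x2 y3) cA2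
    obtain ⟨w4, w3, h43, hA3, w4D1, w3D2⟩ :=
      split2 (h2 2 x3) (hm 2 0 (by decide) x3 y1) (hm 2 1 (by decide) x3 y2) cA3
    have mw1A1 : w1 ∈ block W 0 x1 := by
      rw [hA1]; exact Set.mem_insert_iff.mpr (Or.inr rfl)
    have mw2A1 : w2 ∈ block W 0 x1 := by rw [hA1]; exact Set.mem_insert _ _
    have mw5A2 : w5 ∈ block W 1 x2 := by rw [hA2]; exact Set.mem_insert _ _
    have mw6A2 : w6 ∈ block W 1 x2 := by
      rw [hA2]; exact Set.mem_insert_iff.mpr (Or.inr rfl)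
    have mw4A3 : w4 ∈ block W 2 x3 := by rw [hA3]; exact Set.mem_insert _ _
    have mw3A3 : w3 ∈ block W 2 x3 := by
      rw [hA3]; exact Set.mem_insert_iff.mpr (Or.inr rfl)
    -- distinctness via aux1 on the y-blocks
    have h23 : w2 ≠ w3 := by
      intro h
      exact aux1 (h2 1 y2) (hm 1 0 (by decide) y2 x1) (hm 1 2 (by decide) y2 x3)
        cD2 w2D2 mw2A1 (by rw [h]; exact mw3A3)
    have h45 : w4 ≠ w5 := by
      intro h
      exact aux1 (h2 0 y1) (hm 0 1 (by decide) y1 x2) (hm 0 2 (by decide) y1 x3)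
        cD1 w4D1 (by rw [h]; exact mw5A2) mw4A3
    have h61 : w6 ≠ w1 := by
      intro h
      exact aux1 (h2 2 y3) (hm 2 0 (by decide) y3 x1) (hm 2 1 (by decide) y3 x2)
        cD3 w6D3 (by rw [h]; exact mw1A1) mw6A2
    -- coordinates of the six landmarks
    have c1a : w1.1 = x1 := mw1A1.2
    have c1c : w1.2.2 = y3 := w1D3.2
    have c2a : w2.1 = x1 := mw2A1.2
    have c2b : w2.2.1 = y2 := w2D2.2
    have c3b : w3.2.1 = y2 := w3D2.2
    have c3c : w3.2.2 = x3 := mw3A3.2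
    have c4c : w4.2.2 = x3 := mw4A3.2
    have c4a : w4.1 = y1 := w4D1.2
    have c5a : w5.1 = y1 := w5D1.2
    have c5b : w5.2.1 = x2 := mw5A2.2
    have c6b : w6.2.1 = x2 := mw6A2.2
    have c6c : w6.2.2 = y3 := w6D3.2
    -- remaining distinctness via coordinates
    have h12 : w1 ≠ w2 := h21.symm
    have h13 : w1 ≠ w3 := fun h => e3 (c3c ▸ h ▸ c1c ▸ rfl)
    have h14 : w1 ≠ w4 := fun h => e1 (c1a ▸ c4a ▸ h ▸ rfl)
    have h15 : w1 ≠ w5 := fun h => e1 (c1a ▸ c5a ▸ h ▸ rfl)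
    have h16 : w1 ≠ w6 := h61.symm
    have h24 : w2 ≠ w4 := fun h => e1 (c2a ▸ c4a ▸ h ▸ rfl)
    have h25 : w2 ≠ w5 := fun h => e1 (c2a ▸ c5a ▸ h ▸ rfl)
    have h26 : w2 ≠ w6 := fun h => e2 (c6b ▸ h ▸ c2b ▸ rfl)
    have h34 : w3 ≠ w4 := h43.symm
    have h35 : w3 ≠ w5 := fun h => e2 (c5b ▸ h ▸ c3b ▸ rfl)
    have h36 : w3 ≠ w6 := fun h => e2 (c6b ▸ h ▸ c3b ▸ rfl)
    have h46 : w4 ≠ w6 := fun h => e3 (c4c ▸ h ▸ c6c ▸ rfl)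
    refine Or.inr ⟨w1, w2, w3, w4, w5, w6,
      pairwise6 h12 h13 h14 h15 h16 h23 h24 h25 h26 h34 h35 h36 h45 h46 h56,
      mw1A1.1, mw2A1.1, mw3A3.1, mw4A3.1, mw5A2.1, mw6A2.1,
      c1a.trans c2a.symm, c4a.trans c5a.symm,
      c2b.trans c3b.symm, c5b.trans c6b.symm,
      c3c.trans c4c.symm, c6c.trans c1c.symm, ?_, ?_, ?_⟩
    · rw [c1a, c4a]; exact e1
    · rw [c2b, c5b]; exact fun h => e2 h.symm
    · rw [c3c, c6c]; exact e3

theorem stmt8 (n : ℕ) (hn : 3 ≤ n) (W : Set (Fin n × Fin n × Fin n))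
    (hW : TwoBasic W) :
    IsResolving W ↔ ¬ HasF1 W ∧ ¬ HasF2 W := by
  constructor
  · intro hres
    constructor
    · intro hF1
      obtain ⟨x, y, hxW, hyW, hxy, hsame⟩ := unresolved_of_F1 hF1
      obtain ⟨w, hw, hne⟩ := (isResolving_iff hn W).mp hres x y hxW hyW hxy
      exact hne (hsame w hw)
    · intro hF2
      obtain ⟨x, y, hxW, hyW, hxy, hsame⟩ := unresolved_of_F2 hW.1 hF2
      obtain ⟨w, hw, hne⟩ := (isResolving_iff hn W).mp hres x y hxW hyW hxy
      exact hne (hsame w hw)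
  · rintro ⟨hF1, hF2⟩
    rw [isResolving_iff hn]
    intro x y hxW hyW hxy
    by_contra hno
    push_neg at hno
    rcases key ⟨hW.1, hW.2⟩ hxW hyW hxy hno with h | h
    · exact hF1 h
    · exact hF2 h
end

section
/- Let n ≥ 3, let W be a 2-basic landmark system for HG(n,n,n;3), and let u = (n+1,n+1,n+1). Then W ∪ {u} is a resolving set for HG(n+1,n+1,n+1;3) if and only if W contains none of: (F1) a forbidden 4-cycle, i.e., a permutation (i,j,k) of (1,2,3), values a ≠ b in [n], c,d ∈ [n], and four distinct landmarks w₁,w₂,w₃,w₄ with W_{i,a} = {w₁,w₂}, W_{i,b} = {w₃,w₄}, W_{j,c} = {w₂,w₃}, W_{k,d} = {w₁,w₄}; (F2) a forbidden 6-cycle, i.e., six distinct landmarks w₁,…,w₆ with (w₁)₁ = (w₂)₁, (w₄)₁ = (w₅)₁, (w₂)₂ = (w₃)₂, (w₅)₂ = (w₆)₂, (w₃)₃ = (w₄)₃, (w₆)₃ = (w₁)₃, and (w₁)₁ ≠ (w₄)₁, (w₂)₂ ≠ (w₅)₂, (w₃)₃ ≠ (w₆)₃; (F3) a rainbow triangle,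 i.e., three distinct landmarks w₁,w₂,w₃ with (w₁)₁ = (w₂)₁, (w₂)₂ = (w₃)₂, (w₃)₃ = (w₁)₃. -/
-- ========== auxiliary definitions and lemmas ==========

section Helpers
variable {α : Type*} [Finite α]

lemma not_two {S T : Set α} {p q : α} (h : (S ∩ T).ncard ≤ 1) (hpq : p ≠ q)
    (hpS : p ∈ S) (hpT : p ∈ T) (hqS : q ∈ S) (hqT : q ∈ T) : False := by
  have hsub : ({p, q} : Set α) ⊆ S ∩ T := by
    intro z hz; rcases hz with rfl | hz
    · exact ⟨hpS, hpT⟩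
    · rcases hz with rfl; exact ⟨hqS, hqT⟩
  have h2 : (2 : ℕ) ≤ (S ∩ T).ncard := by
    have := Set.ncard_le_ncard hsub ((S ∩ T).toFinite)
    rwa [Set.ncard_pair hpq] at this
  omega

lemma eq_pair {S : Set α} {p q : α} (h2 : S.ncard = 2) (hpq : p ≠ q)
    (hp : p ∈ S) (hq : q ∈ S) : S = {p, q} := by
  refine (Set.eq_of_subset_of_ncard_le ?_ ?_ (S.toFinite)).symm
  · intro z hz; rcases hz with rfl | hz
    · exact hp
    · rcases hz with rfl; exact hq
  · rw [h2, Set.ncard_pair hpq]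

lemma excl {B X Y : Set α} (h2 : B.ncard = 2) (hsub : B ⊆ X ∪ Y)
    (hX : (B ∩ X).ncard ≤ 1) (hY : (B ∩ Y).ncard ≤ 1) :
    ∃ p q, p ≠ q ∧ B = {p, q} ∧ p ∈ X ∧ p ∉ Y ∧ q ∈ Y ∧ q ∉ X := by
  obtain ⟨p, q, hpq, rfl⟩ := Set.ncard_eq_two.1 h2
  have hp : p ∈ ({p, q} : Set α) := by simp
  have hq : q ∈ ({p, q} : Set α) := by simp
  rcases hsub hp with hpX | hpY <;> rcases hsub hq with hqX | hqY
  · exact absurd (not_two hX hpq hp hpX hq hqX) not_false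
  · refine ⟨p, q, hpq, rfl, hpX, ?_, hqY, ?_⟩
    · intro hpY; exact not_two hY hpq hp hpY hq hqY
    · intro hqX; exact not_two hX hpq hp hpX hq hqX
  · refine ⟨q, p, hpq.symm, Set.pair_comm p q, hqX, ?_, hpY, ?_⟩
    · intro hqY; exact not_two hY hpq hp hpY hq hqY
    · intro hpX; exact not_two hX hpq hp hpX hq hqX
  · exact absurd (not_two hY hpq hp hpY hq hqY) not_false

end Helpers

section Blocks
variable {n : ℕ} {W : Set (Fin n × Fin n × Fin n)}

lemma mem_block0 {w : Fin n × Fin n × Fin n} {a : Fin n} :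
    w ∈ block W 0 a ↔ w ∈ W ∧ w.1 = a := by
  simp [block, coord]

lemma mem_block1 {w : Fin n × Fin n × Fin n} {a : Fin n} :
    w ∈ block W 1 a ↔ w ∈ W ∧ w.2.1 = a := by
  simp [block, coord, show (1 : Fin 3) ≠ 0 by decide]

lemma mem_block2 {w : Fin n × Fin n × Fin n} {a : Fin n} :
    w ∈ block W 2 a ↔ w ∈ W ∧ w.2.2 = a := by
  simp [block, coord, show (2 : Fin 3) ≠ 0 by decide, show (2 : Fin 3) ≠ 1 by decide]

lemma cross' (hW : TwoBasic W) {i j : Fin 3} (hij : i ≠ j) (a b : Fin n) :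
    (block W i a ∩ block W j b).ncard ≤ 1 := by
  rcases lt_or_gt_of_ne hij with h | h
  · exact hW.2 i j h a b
  · rw [Set.inter_comm]; exact hW.2 j i h b a

lemma same_col {i : Fin 3} {a b : Fin n} (hab : a ≠ b)
    {w : Fin n × Fin n × Fin n} (ha : w ∈ block W i a) (hb : w ∈ block W i b) : False :=
  hab (ha.2.symm.trans hb.2)

lemma block_subset {i : Fin 3} {a : Fin n} : block W i a ⊆ W := fun _ h => h.1

lemma block_pair (hW : TwoBasic W) (i : Fin 3) (a : Fin n) :
    ∃ p q, p ≠ q ∧ block W i a = {p, q} := by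
  obtain ⟨p, q, h, hs⟩ := Set.ncard_eq_two.1 (hW.1 i a)
  exact ⟨p, q, h, hs⟩

/-- a block of one color cannot be contained in a block of another color -/
lemma subset_contra (hW : TwoBasic W) {i j : Fin 3} (hij : i ≠ j) {a b : Fin n}
    (h : block W i a ⊆ block W j b) : False := by
  obtain ⟨p, q, hpq, hs⟩ := block_pair hW i a
  have hp : p ∈ block W i a := by rw [hs]; simp
  have hq : q ∈ block W i a := by rw [hs]; simp
  exact not_two (cross' hW hij a b) hpq hp (h hp) hq (h hq)

/-- two equal blocks of the same color have the same value -/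
lemma sameSingleton (hW : TwoBasic W) {i : Fin 3} {a b : Fin n}
    (h : block W i a = block W i b) : a = b := by
  obtain ⟨p, q, hpq, hs⟩ := block_pair hW i a
  have hp : p ∈ block W i a := by rw [hs]; simp
  have hp' : p ∈ block W i b := h ▸ hp
  exact hp.2.symm.trans hp'.2

/-- two blocks of different colors cannot be equal -/
lemma crossSingleton (hW : TwoBasic W) {i j : Fin 3} (hij : i ≠ j) {a b : Fin n}
    (h : block W i a = block W j b) : False :=
  subset_contra hW hij h.subset

lemma block_disj {i : Fin 3} {a b : Fin n} (hab : a ≠ b)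
    {w : Fin n × Fin n × Fin n} (hw : w ∈ block W i a) : w ∉ block W i b :=
  fun hb => same_col hab hw hb

end Blocks

section CaseB
variable {n : ℕ} {W : Set (Fin n × Fin n × Fin n)}

lemma pairSamePair (hW : TwoBasic W) {i j : Fin 3} (hij : i ≠ j) {a b a' b' : Fin n}
    (h : block W i a ∪ block W j b = block W i a' ∪ block W j b') : a = a' ∧ b = b' := by
  have ha : a = a' := by
    by_contra hne
    obtain ⟨p, q, hpq, hs⟩ := block_pair hW i a
    have hp : p ∈ block W i a := by rw [hs]; simp
    have hq : q ∈ block W i a := by rw [hs]; simp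
    have hp' : p ∈ block W i a' ∪ block W j b' := h ▸ (Set.mem_union_left _ hp)
    have hq' : q ∈ block W i a' ∪ block W j b' := h ▸ (Set.mem_union_left _ hq)
    have hpj : p ∈ block W j b' := hp'.resolve_left (block_disj hne hp)
    have hqj : q ∈ block W j b' := hq'.resolve_left (block_disj hne hq)
    exact not_two (cross' hW hij a b') hpq hp hpj hq hqj
  subst ha
  refine ⟨rfl, ?_⟩
  by_contra hne
  obtain ⟨p, q, hpq, hs⟩ := block_pair hW j b
  have hp : p ∈ block W j b := by rw [hs]; simp
  have hq : q ∈ block W j b := by rw [hs]; simp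
  have hp' : p ∈ block W i a ∪ block W j b' := h ▸ (Set.mem_union_right _ hp)
  have hq' : q ∈ block W i a ∪ block W j b' := h ▸ (Set.mem_union_right _ hq)
  have hpj : p ∈ block W i a := by
    rcases hp' with h' | h'
    · exact h'
    · exact absurd h' (block_disj hne hp)
  have hqj : q ∈ block W i a := by
    rcases hq' with h' | h'
    · exact h'
    · exact absurd h' (block_disj hne hq)
  exact not_two (cross' hW (Ne.symm hij) b a) hpq hp hpj hq hqj

/-- shared color first: `B0 a ∪ B1 b = B0 a' ∪ B2 c` yields a rainbow triangle. -/
lemma Le0 (hW : TwoBasic W) {a b a' c : Fin n}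
    (h : block W 0 a ∪ block W 1 b = block W 0 a' ∪ block W 2 c) : HasF3 W := by
  -- first: a = a'
  have ha : a = a' := by
    by_contra hne
    obtain ⟨p, q, hpq, hs⟩ := block_pair hW 0 a
    have hp : p ∈ block W 0 a := by rw [hs]; simp
    have hq : q ∈ block W 0 a := by rw [hs]; simp
    have hp' : p ∈ block W 0 a' ∪ block W 2 c := h ▸ (Set.mem_union_left _ hp)
    have hq' : q ∈ block W 0 a' ∪ block W 2 c := h ▸ (Set.mem_union_left _ hq)
    have hpj : p ∈ block W 2 c := hp'.resolve_left (block_disj hne hp)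
    have hqj : q ∈ block W 2 c := hq'.resolve_left (block_disj hne hq)
    exact not_two (cross' hW (show (0:Fin 3) ≠ 2 by decide) a c) hpq hp hpj hq hqj
  subst ha
  -- decompose block 1 b inside block 0 a ∪ block 2 c
  obtain ⟨s, t, hst, hB1, hsX, hsY, htY, htX⟩ :=
    excl (hW.1 1 b) (show block W 1 b ⊆ block W 0 a ∪ block W 2 c by
      intro v hv
      have : v ∈ block W 0 a ∪ block W 2 c := h ▸ (Set.mem_union_right _ hv)
      exact this)
      (cross' hW (show (1:Fin 3) ≠ 0 by decide) b a)
      (cross' hW (show (1:Fin 3) ≠ 2 by decide) b c)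
  obtain ⟨s', t', hst', hB2, hsX', hsY', htY', htX'⟩ :=
    excl (hW.1 2 c) (show block W 2 c ⊆ block W 0 a ∪ block W 1 b by
      intro v hv
      have : v ∈ block W 0 a ∪ block W 1 b := h.symm ▸ (Set.mem_union_right _ hv)
      exact this)
      (cross' hW (show (2:Fin 3) ≠ 0 by decide) c a)
      (cross' hW (show (2:Fin 3) ≠ 1 by decide) c b)
  -- t' ∈ block 1 b = {s,t}, t' ∉ block 0 a, s ∈ block 0 a, so t' = t
  have ht't : t' = t := by
    have := hB1 ▸ htY'
    rcases this with h' | h'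
    · exact absurd (h' ▸ hsX) htX'
    · exact h'
  rw [ht't] at hst' hB2 htY' htX'
  -- s ≠ s'
  have hss' : s' ≠ s := by
    intro he
    exact hsY' (he ▸ (by rw [hB1]; simp : s ∈ block W 1 b))
  have hs't : s' ≠ t := fun he => htX' (he ▸ hsX')
  -- triangle (s', s, t)
  have hsmem : s ∈ block W 1 b := by rw [hB1]; simp
  have htmem : t ∈ block W 1 b := by rw [hB1]; simp
  have hs'mem : s' ∈ block W 2 c := by rw [hB2]; simp
  have htmem2 : t ∈ block W 2 c := by rw [hB2]; simp
  refine ⟨s', s, t, ?_, block_subset hs'mem, block_subset hsmem, block_subset htmem, ?_, ?_, ?_⟩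
  · simp [hss', hs't, hst]
  · exact (mem_block0.1 hsX').2.trans (mem_block0.1 hsX).2.symm
  · exact (mem_block1.1 hsmem).2.trans (mem_block1.1 htmem).2.symm
  · exact (mem_block2.1 htmem2).2.trans (mem_block2.1 hs'mem).2.symm

/-- shared color second: `B0 a ∪ B1 b = B1 b' ∪ B2 c` yields a rainbow triangle. -/
lemma Le1 (hW : TwoBasic W) {a b b' c : Fin n}
    (h : block W 0 a ∪ block W 1 b = block W 1 b' ∪ block W 2 c) : HasF3 W := by
  have hb : b = b' := by
    by_contra hne
    obtain ⟨p, q, hpq, hs⟩ := block_pair hW 1 b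
    have hp : p ∈ block W 1 b := by rw [hs]; simp
    have hq : q ∈ block W 1 b := by rw [hs]; simp
    have hp' : p ∈ block W 1 b' ∪ block W 2 c := h ▸ (Set.mem_union_right _ hp)
    have hq' : q ∈ block W 1 b' ∪ block W 2 c := h ▸ (Set.mem_union_right _ hq)
    have hpj : p ∈ block W 2 c := hp'.resolve_left (block_disj hne hp)
    have hqj : q ∈ block W 2 c := hq'.resolve_left (block_disj hne hq)
    exact not_two (cross' hW (show (1:Fin 3) ≠ 2 by decide) b c) hpq hp hpj hq hqj
  subst hb
  -- decompose block 0 a inside block 1 b ∪ block 2 c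
  obtain ⟨s, t, hst, hB0, hsX, hsY, htY, htX⟩ :=
    excl (hW.1 0 a) (show block W 0 a ⊆ block W 1 b ∪ block W 2 c by
      intro v hv
      have : v ∈ block W 1 b ∪ block W 2 c := h ▸ (Set.mem_union_left _ hv)
      exact this)
      (cross' hW (show (0:Fin 3) ≠ 1 by decide) a b)
      (cross' hW (show (0:Fin 3) ≠ 2 by decide) a c)
  obtain ⟨s', t', hst', hB2, hsX', hsY', htY', htX'⟩ :=
    excl (hW.1 2 c) (show block W 2 c ⊆ block W 1 b ∪ block W 0 a by
      intro v hv
      have : v ∈ block W 0 a ∪ block W 1 b := h.symm ▸ (Set.mem_union_right _ hv)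
      exact this.symm
      )
      (cross' hW (show (2:Fin 3) ≠ 1 by decide) c b)
      (cross' hW (show (2:Fin 3) ≠ 0 by decide) c a)
  -- here block0 a = {s,t}, s ∈ block1 b \ block2 c, t ∈ block2 c \ block1 b,
  --      block2 c = {s',t'}, s' ∈ block1 b \ block0 a, t' ∈ block0 a \ block1 b.
  have ht't : t' = t := by
    have := hB0 ▸ htY'
    rcases this with h' | h'
    · exact absurd (h' ▸ hsX) htX'
    · exact h'
  rw [ht't] at hst' hB2 htY' htX'
  have hss' : s ≠ s' := fun he => hsY' (he ▸ (by rw [hB0]; simp : s ∈ block W 0 a))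
  have hs't : s' ≠ t := fun he => htX' (he ▸ hsX')
  -- triangle: edges {s,t} color0, {s,s'} color1, {s',t} color2
  have hsmem : s ∈ block W 0 a := by rw [hB0]; simp
  have htmem : t ∈ block W 0 a := by rw [hB0]; simp
  have hs'mem : s' ∈ block W 2 c := by rw [hB2]; simp
  have htmem2 : t ∈ block W 2 c := by rw [hB2]; simp
  -- (w1,w2,w3) = (t, s, s')
  refine ⟨t, s, s', ?_, block_subset htmem, block_subset hsmem, block_subset hs'mem, ?_, ?_, ?_⟩
  · simp [hst.symm, hs't.symm, hss']
  · exact (mem_block0.1 htmem).2.trans (mem_block0.1 hsmem).2.symm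
  · exact (mem_block1.1 hsX).2.trans (mem_block1.1 hsX').2.symm
  · exact (mem_block2.1 hs'mem).2.trans (mem_block2.1 htmem2).2.symm

/-- shared color third: `B0 a ∪ B2 c = B1 b ∪ B2 c'` yields a rainbow triangle. -/
lemma Le2 (hW : TwoBasic W) {a b c c' : Fin n}
    (h : block W 0 a ∪ block W 2 c = block W 1 b ∪ block W 2 c') : HasF3 W := by
  have hc : c = c' := by
    by_contra hne
    obtain ⟨p, q, hpq, hs⟩ := block_pair hW 2 c
    have hp : p ∈ block W 2 c := by rw [hs]; simp
    have hq : q ∈ block W 2 c := by rw [hs]; simp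
    have hp' : p ∈ block W 1 b ∪ block W 2 c' := h ▸ (Set.mem_union_right _ hp)
    have hq' : q ∈ block W 1 b ∪ block W 2 c' := h ▸ (Set.mem_union_right _ hq)
    have hpj : p ∈ block W 1 b := by
      rcases hp' with h' | h'
      · exact h'
      · exact absurd h' (block_disj hne hp)
    have hqj : q ∈ block W 1 b := by
      rcases hq' with h' | h'
      · exact h'
      · exact absurd h' (block_disj hne hq)
    exact not_two (cross' hW (show (2:Fin 3) ≠ 1 by decide) c b) hpq hp hpj hq hqj
  subst hc
  -- block0 a ⊆ block1 b ∪ block2 c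
  obtain ⟨s, t, hst, hB0, hsX, hsY, htY, htX⟩ :=
    excl (hW.1 0 a) (show block W 0 a ⊆ block W 1 b ∪ block W 2 c by
      intro v hv
      have : v ∈ block W 1 b ∪ block W 2 c := h ▸ (Set.mem_union_left _ hv)
      exact this)
      (cross' hW (show (0:Fin 3) ≠ 1 by decide) a b)
      (cross' hW (show (0:Fin 3) ≠ 2 by decide) a c)
  -- block1 b ⊆ block0 a ∪ block2 c
  obtain ⟨s', t', hst', hB1, hsX', hsY', htY', htX'⟩ :=
    excl (hW.1 1 b) (show block W 1 b ⊆ block W 0 a ∪ block W 2 c by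
      intro v hv
      have : v ∈ block W 0 a ∪ block W 2 c := h.symm ▸ (Set.mem_union_left _ hv)
      exact this)
      (cross' hW (show (1:Fin 3) ≠ 0 by decide) b a)
      (cross' hW (show (1:Fin 3) ≠ 2 by decide) b c)
  -- block0 a = {s,t}: s ∈ block1 b \ block2 c, t ∈ block2 c \ block1 b
  -- block1 b = {s',t'}: s' ∈ block0 a \ block2 c, t' ∈ block2 c \ block0 a
  have hs's : s' = s := by
    have := hB0 ▸ hsX'
    rcases this with h' | h'
    · exact h'
    · exact absurd (h' ▸ htY) hsY'
  rw [hs's] at hst' hB1 hsX' hsY' 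
  have hstt' : t ≠ t' := fun he => htX' (he ▸ (by rw [hB0]; simp : t ∈ block W 0 a))
  have hst' : s ≠ t' := fun he => hsY (he ▸ htY')
  -- triangle: {s,t} color0, {s,t'} color1, {t,t'} color2
  have hsmem : s ∈ block W 0 a := by rw [hB0]; simp
  have htmem : t ∈ block W 0 a := by rw [hB0]; simp
  have ht'mem : t' ∈ block W 1 b := by rw [hB1]; simp
  have hsmem1 : s ∈ block W 1 b := by rw [hB1]; simp
  -- (w1,w2,w3) = (t, s, t')
  refine ⟨t, s, t', ?_, block_subset htmem, block_subset hsmem, block_subset ht'mem, ?_, ?_, ?_⟩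
  · simp [hst.symm, hstt', hst']
  · exact (mem_block0.1 htmem).2.trans (mem_block0.1 hsmem).2.symm
  · exact (mem_block1.1 hsmem1).2.trans (mem_block1.1 ht'mem).2.symm
  · exact (mem_block2.1 htY').2.trans (mem_block2.1 htY).2.symm

end CaseB

section CaseA
variable {α : Type*} [Finite α]

lemma subU1 {A B C A' B' C' : Set α} (hU : A ∪ B ∪ C = A' ∪ B' ∪ C')
    (hd : ∀ v ∈ A, v ∉ A') : A ⊆ B' ∪ C' := by
  intro v hv
  have h : v ∈ A' ∪ B' ∪ C' := hU ▸ (Set.mem_union_left _ (Set.mem_union_left _ hv))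
  rcases h with (h | h) | h
  · exact absurd h (hd v hv)
  · exact Set.mem_union_left _ h
  · exact Set.mem_union_right _ h

lemma subU2 {A B C A' B' C' : Set α} (hU : A ∪ B ∪ C = A' ∪ B' ∪ C')
    (hd : ∀ v ∈ B, v ∉ B') : B ⊆ A' ∪ C' := by
  intro v hv
  have h : v ∈ A' ∪ B' ∪ C' := hU ▸ (Set.mem_union_left _ (Set.mem_union_right _ hv))
  rcases h with (h | h) | h
  · exact Set.mem_union_left _ h
  · exact absurd h (hd v hv)
  · exact Set.mem_union_right _ h

lemma subU3 {A B C A' B' C' : Set α} (hU : A ∪ B ∪ C = A' ∪ B' ∪ C')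
    (hd : ∀ v ∈ C, v ∉ C') : C ⊆ A' ∪ B' := by
  intro v hv
  have h : v ∈ A' ∪ B' ∪ C' := hU ▸ (Set.mem_union_right _ hv)
  rcases h with h | h
  · exact h
  · exact absurd h (hd v hv)

end CaseA

def perm210 : Equiv.Perm (Fin 3) := ⟨![2,0,1], ![1,2,0], by decide, by decide⟩

section CaseAMain
variable {n : ℕ} {W : Set (Fin n × Fin n × Fin n)}

lemma mem_of_three {x1 x2 x3 : Fin n} {v : Fin n × Fin n × Fin n}
    (h0 : v ∈ block W 0 x1) (h1 : v ∈ block W 1 x2) (h2 : v ∈ block W 2 x3) :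
    ((x1, x2, x3) : Fin n × Fin n × Fin n) ∈ W := by
  have e0 := (mem_block0.1 h0).2
  have e1 := (mem_block1.1 h1).2
  have e2 := (mem_block2.1 h2).2
  have : v = (x1, x2, x3) := by
    apply Prod.ext e0 (Prod.ext e1 e2)
  exact this ▸ h0.1

lemma caseA (hW : TwoBasic W) {x1 x2 x3 y1 y2 y3 : Fin n}
    (hx : ((x1, x2, x3) : Fin n × Fin n × Fin n) ∉ W)
    (hy : ((y1, y2, y3) : Fin n × Fin n × Fin n) ∉ W)
    (hne : ((x1, x2, x3) : Fin n × Fin n × Fin n) ≠ (y1, y2, y3))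
    (hU : block W 0 x1 ∪ block W 1 x2 ∪ block W 2 x3
        = block W 0 y1 ∪ block W 1 y2 ∪ block W 2 y3) :
    HasF1 W ∨ HasF2 W := by
  by_cases h1 : x1 = y1 <;> by_cases h2 : x2 = y2 <;> by_cases h3 : x3 = y3
  · exact absurd (by rw [h1, h2, h3]) hne
  -- D = {3} : F1 with colors (2,0,1)
  · subst h1; subst h2
    obtain ⟨p, q, hpq, hBx, hpX, hpY, hqY, hqX⟩ :=
      excl (hW.1 2 x3) (subU3 hU (fun v hv => block_disj h3 hv))
        (cross' hW (show (2:Fin 3) ≠ 0 by decide) x3 x1)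
        (cross' hW (show (2:Fin 3) ≠ 1 by decide) x3 x2)
    obtain ⟨p', q', hpq', hBy, hpX', hpY', hqY', hqX'⟩ :=
      excl (hW.1 2 y3) (subU3 hU.symm (fun v hv => block_disj (Ne.symm h3) hv))
        (cross' hW (show (2:Fin 3) ≠ 0 by decide) y3 x1)
        (cross' hW (show (2:Fin 3) ≠ 1 by decide) y3 x2)
    have hpp' : p ≠ p' := fun he => same_col h3
      (show p ∈ block W 2 x3 by rw [hBx]; simp)
      (show p ∈ block W 2 y3 by rw [hBy, he]; simp)
    have hqq' : q ≠ q' := fun he => same_col h3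
      (show q ∈ block W 2 x3 by rw [hBx]; simp)
      (show q ∈ block W 2 y3 by rw [hBy, he]; simp)
    have hpq'2 : p ≠ q' := fun he => hqX' (he ▸ hpX)
    have hp'q : p' ≠ q := fun he => hqX (he ▸ hpX')
    have hB0 : block W 0 x1 = {p, p'} := eq_pair (hW.1 0 x1) hpp' hpX hpX'
    have hB1 : block W 1 x2 = {q, q'} := eq_pair (hW.1 1 x2) hqq' hqY hqY'
    refine Or.inl ⟨perm210, x3, y3, x1, x2, q, p, p', q', h3, ?_, ?_, ?_, ?_, ?_⟩
    · simp [hpq.symm, hp'q.symm, hqq', hpp', hpq'2, hpq']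
    · show block W 2 x3 = {q, p}; rw [hBx, Set.pair_comm]
    · show block W 2 y3 = {p', q'}; exact hBy
    · show block W 0 x1 = {p, p'}; exact hB0
    · show block W 1 x2 = {q, q'}; exact hB1
  -- D = {2} : F1 with swap 0 1
  · subst h1; subst h3
    obtain ⟨p, q, hpq, hBx, hpX, hpY, hqY, hqX⟩ :=
      excl (hW.1 1 x2) (subU2 hU (fun v hv => block_disj h2 hv))
        (cross' hW (show (1:Fin 3) ≠ 0 by decide) x2 x1)
        (cross' hW (show (1:Fin 3) ≠ 2 by decide) x2 x3)
    obtain ⟨p', q', hpq', hBy, hpX', hpY', hqY', hqX'⟩ :=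
      excl (hW.1 1 y2) (subU2 hU.symm (fun v hv => block_disj (Ne.symm h2) hv))
        (cross' hW (show (1:Fin 3) ≠ 0 by decide) y2 x1)
        (cross' hW (show (1:Fin 3) ≠ 2 by decide) y2 x3)
    have hpp' : p ≠ p' := fun he => same_col h2
      (show p ∈ block W 1 x2 by rw [hBx]; simp)
      (show p ∈ block W 1 y2 by rw [hBy, he]; simp)
    have hqq' : q ≠ q' := fun he => same_col h2
      (show q ∈ block W 1 x2 by rw [hBx]; simp)
      (show q ∈ block W 1 y2 by rw [hBy, he]; simp)
    have hpq'2 : p ≠ q' := fun he => hqX' (he ▸ hpX)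
    have hp'q : p' ≠ q := fun he => hqX (he ▸ hpX')
    have hB0 : block W 0 x1 = {p, p'} := eq_pair (hW.1 0 x1) hpp' hpX hpX'
    have hB2 : block W 2 x3 = {q, q'} := eq_pair (hW.1 2 x3) hqq' hqY hqY'
    refine Or.inl ⟨Equiv.swap 0 1, x2, y2, x1, x3, q, p, p', q', h2, ?_, ?_, ?_, ?_, ?_⟩
    · simp [hpq.symm, hp'q.symm, hqq', hpp', hpq'2, hpq']
    · rw [show ((Equiv.swap 0 1 : Equiv.Perm (Fin 3)) 0) = 1 by decide, hBx, Set.pair_comm]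
    · rw [show ((Equiv.swap 0 1 : Equiv.Perm (Fin 3)) 0) = 1 by decide]; exact hBy
    · rw [show ((Equiv.swap 0 1 : Equiv.Perm (Fin 3)) 1) = 0 by decide]; exact hB0
    · rw [show ((Equiv.swap 0 1 : Equiv.Perm (Fin 3)) 2) = 2 by decide]; exact hB2
  -- D = {2,3} : impossible
  · subst h1
    exfalso
    obtain ⟨s, t, hst, hBf2, hsX, hsY, htY, htX⟩ :=
      excl (hW.1 1 y2) (subU2 hU.symm (fun v hv => block_disj (Ne.symm h2) hv))
        (cross' hW (show (1:Fin 3) ≠ 0 by decide) y2 x1)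
        (cross' hW (show (1:Fin 3) ≠ 2 by decide) y2 x3)
    obtain ⟨u, v, huv, hBf3, huX, huY, hvY, hvX⟩ :=
      excl (hW.1 2 y3) (subU3 hU.symm (fun w hw => block_disj (Ne.symm h3) hw))
        (cross' hW (show (2:Fin 3) ≠ 0 by decide) y3 x1)
        (cross' hW (show (2:Fin 3) ≠ 1 by decide) y3 x2)
    obtain ⟨s', t', hst', hBe2, hsX', hsY', htY', htX'⟩ :=
      excl (hW.1 1 x2) (subU2 hU (fun v hv => block_disj h2 hv))
        (cross' hW (show (1:Fin 3) ≠ 0 by decide) x2 x1)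
        (cross' hW (show (1:Fin 3) ≠ 2 by decide) x2 y3)
    obtain ⟨u', v', huv', hBe3, huX', huY', hvY', hvX'⟩ :=
      excl (hW.1 2 x3) (subU3 hU (fun w hw => block_disj h3 hw))
        (cross' hW (show (2:Fin 3) ≠ 0 by decide) x3 x1)
        (cross' hW (show (2:Fin 3) ≠ 1 by decide) x3 y2)
    -- s,s',u,u' ∈ block 0 x1
    have hss' : s ≠ s' := fun he => same_col h2
      (show s ∈ block W 1 x2 by rw [hBe2, ← he]; simp)
      (show s ∈ block W 1 y2 by rw [hBf2]; simp)
    have huu' : u ≠ u' := fun he => same_col h3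
      (show u ∈ block W 2 x3 by rw [hBe3, ← he]; simp)
      (show u ∈ block W 2 y3 by rw [hBf3]; simp)
    have hsu' : s ≠ u' := fun he => huY' (he ▸ (show s ∈ block W 1 y2 by rw [hBf2]; simp))
    have hB0 : block W 0 x1 = {s, s'} := eq_pair (hW.1 0 x1) hss' hsX hsX'
    have hu'mem : u' ∈ ({s, s'} : Set (Fin n × Fin n × Fin n)) := hB0 ▸ huX'
    have hu's' : u' = s' := by
      rcases hu'mem with h' | h'
      · exact absurd h'.symm hsu'
      · exact h'
    exact hx (mem_of_three hsX'
      (show s' ∈ block W 1 x2 by rw [hBe2]; simp)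
      (hu's' ▸ (show u' ∈ block W 2 x3 by rw [hBe3]; simp)))
  -- D = {1} : F1 with identity
  · subst h2; subst h3
    obtain ⟨p, q, hpq, hBx, hpX, hpY, hqY, hqX⟩ :=
      excl (hW.1 0 x1) (subU1 hU (fun v hv => block_disj h1 hv))
        (cross' hW (show (0:Fin 3) ≠ 1 by decide) x1 x2)
        (cross' hW (show (0:Fin 3) ≠ 2 by decide) x1 x3)
    obtain ⟨p', q', hpq', hBy, hpX', hpY', hqY', hqX'⟩ :=
      excl (hW.1 0 y1) (subU1 hU.symm (fun v hv => block_disj (Ne.symm h1) hv))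
        (cross' hW (show (0:Fin 3) ≠ 1 by decide) y1 x2)
        (cross' hW (show (0:Fin 3) ≠ 2 by decide) y1 x3)
    have hpp' : p ≠ p' := fun he => same_col h1
      (show p ∈ block W 0 x1 by rw [hBx]; simp)
      (show p ∈ block W 0 y1 by rw [hBy, he]; simp)
    have hqq' : q ≠ q' := fun he => same_col h1
      (show q ∈ block W 0 x1 by rw [hBx]; simp)
      (show q ∈ block W 0 y1 by rw [hBy, he]; simp)
    have hpq'2 : p ≠ q' := fun he => hqX' (he ▸ hpX)
    have hp'q : p' ≠ q := fun he => hqX (he ▸ hpX')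
    have hB1 : block W 1 x2 = {p, p'} := eq_pair (hW.1 1 x2) hpp' hpX hpX'
    have hB2 : block W 2 x3 = {q, q'} := eq_pair (hW.1 2 x3) hqq' hqY hqY'
    refine Or.inl ⟨Equiv.refl _, x1, y1, x2, x3, q, p, p', q', h1, ?_, ?_, ?_, ?_, ?_⟩
    · simp [hpq.symm, hp'q.symm, hqq', hpp', hpq'2, hpq']
    · show block W 0 x1 = {q, p}; rw [hBx, Set.pair_comm]
    · show block W 0 y1 = {p', q'}; exact hBy
    · show block W 1 x2 = {p, p'}; exact hB1
    · show block W 2 x3 = {q, q'}; exact hB2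
  -- D = {1,3} : impossible
  · subst h2
    exfalso
    obtain ⟨s, t, hst, hBf1, hsX, hsY, htY, htX⟩ :=
      excl (hW.1 0 y1) (subU1 hU.symm (fun v hv => block_disj (Ne.symm h1) hv))
        (cross' hW (show (0:Fin 3) ≠ 1 by decide) y1 x2)
        (cross' hW (show (0:Fin 3) ≠ 2 by decide) y1 x3)
    obtain ⟨u, v, huv, hBf3, huX, huY, hvY, hvX⟩ :=
      excl (hW.1 2 y3) (subU3 hU.symm (fun w hw => block_disj (Ne.symm h3) hw))
        (cross' hW (show (2:Fin 3) ≠ 0 by decide) y3 x1)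
        (cross' hW (show (2:Fin 3) ≠ 1 by decide) y3 x2)
    obtain ⟨s', t', hst', hBe1, hsX', hsY', htY', htX'⟩ :=
      excl (hW.1 0 x1) (subU1 hU (fun v hv => block_disj h1 hv))
        (cross' hW (show (0:Fin 3) ≠ 1 by decide) x1 x2)
        (cross' hW (show (0:Fin 3) ≠ 2 by decide) x1 y3)
    obtain ⟨u', v', huv', hBe3, huX', huY', hvY', hvX'⟩ :=
      excl (hW.1 2 x3) (subU3 hU (fun w hw => block_disj h3 hw))
        (cross' hW (show (2:Fin 3) ≠ 0 by decide) x3 y1)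
        (cross' hW (show (2:Fin 3) ≠ 1 by decide) x3 x2)
    -- s,s',v,v' ∈ block 1 x2;  v' = s' forced; then s' ∈ all three x-blocks
    have hss' : s ≠ s' := fun he => same_col h1
      (show s ∈ block W 0 x1 by rw [hBe1, ← he]; simp)
      (show s ∈ block W 0 y1 by rw [hBf1]; simp)
    have hvv' : v ≠ v' := fun he => same_col h3
      (show v ∈ block W 2 x3 by rw [hBe3, ← he]; simp)
      (show v ∈ block W 2 y3 by rw [hBf3]; simp)
    have hsv' : s ≠ v' := fun he => hvX' (he ▸ (show s ∈ block W 0 y1 by rw [hBf1]; simp))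
    have hB1 : block W 1 x2 = {s, s'} := eq_pair (hW.1 1 x2) hss' hsX hsX'
    have hv'mem : v' ∈ ({s, s'} : Set (Fin n × Fin n × Fin n)) := hB1 ▸ hvY'
    have hv's' : v' = s' := by
      rcases hv'mem with h' | h'
      · exact absurd h'.symm hsv'
      · exact h'
    exact hx (mem_of_three (show s' ∈ block W 0 x1 by rw [hBe1]; simp) hsX'
      (hv's' ▸ (show v' ∈ block W 2 x3 by rw [hBe3]; simp)))
  -- D = {1,2} : impossible
  · subst h3
    exfalso
    obtain ⟨s, t, hst, hBf1, hsX, hsY, htY, htX⟩ :=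
      excl (hW.1 0 y1) (subU1 hU.symm (fun v hv => block_disj (Ne.symm h1) hv))
        (cross' hW (show (0:Fin 3) ≠ 1 by decide) y1 x2)
        (cross' hW (show (0:Fin 3) ≠ 2 by decide) y1 x3)
    obtain ⟨u, v, huv, hBf2, huX, huY, hvY, hvX⟩ :=
      excl (hW.1 1 y2) (subU2 hU.symm (fun w hw => block_disj (Ne.symm h2) hw))
        (cross' hW (show (1:Fin 3) ≠ 0 by decide) y2 x1)
        (cross' hW (show (1:Fin 3) ≠ 2 by decide) y2 x3)
    obtain ⟨s', t', hst', hBe1, hsX', hsY', htY', htX'⟩ :=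
      excl (hW.1 0 x1) (subU1 hU (fun v hv => block_disj h1 hv))
        (cross' hW (show (0:Fin 3) ≠ 1 by decide) x1 y2)
        (cross' hW (show (0:Fin 3) ≠ 2 by decide) x1 x3)
    obtain ⟨u', v', huv', hBe2, huX', huY', hvY', hvX'⟩ :=
      excl (hW.1 1 x2) (subU2 hU (fun w hw => block_disj h2 hw))
        (cross' hW (show (1:Fin 3) ≠ 0 by decide) x2 y1)
        (cross' hW (show (1:Fin 3) ≠ 2 by decide) x2 x3)
    -- t,t',v,v' ∈ block 2 x3; v' = t' forced; then t' ∈ all three x-blocks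
    have htt' : t ≠ t' := fun he => same_col h1
      (show t ∈ block W 0 x1 by rw [hBe1, ← he]; simp)
      (show t ∈ block W 0 y1 by rw [hBf1]; simp)
    have hvv' : v ≠ v' := fun he => same_col h2
      (show v ∈ block W 1 x2 by rw [hBe2, ← he]; simp)
      (show v ∈ block W 1 y2 by rw [hBf2]; simp)
    have htv' : t ≠ v' := fun he => hvX' (he ▸ (show t ∈ block W 0 y1 by rw [hBf1]; simp))
    have hB2 : block W 2 x3 = {t, t'} := eq_pair (hW.1 2 x3) htt' htY htY'
    have hv'mem : v' ∈ ({t, t'} : Set (Fin n × Fin n × Fin n)) := hB2 ▸ hvY'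
    have hv't' : v' = t' := by
      rcases hv'mem with h' | h'
      · exact absurd h'.symm htv'
      · exact h'
    exact hx (mem_of_three (show t' ∈ block W 0 x1 by rw [hBe1]; simp)
      (hv't' ▸ (show v' ∈ block W 1 x2 by rw [hBe2]; simp)) htY')
  -- D = {1,2,3} : F2
  · obtain ⟨p1, q1, hpq1, hBf1, hp1X, hp1Y, hq1Y, hq1X⟩ :=
      excl (hW.1 0 y1) (subU1 hU.symm (fun v hv => block_disj (Ne.symm h1) hv))
        (cross' hW (show (0:Fin 3) ≠ 1 by decide) y1 x2)
        (cross' hW (show (0:Fin 3) ≠ 2 by decide) y1 x3)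
    obtain ⟨p2, q2, hpq2, hBf2, hp2X, hp2Y, hq2Y, hq2X⟩ :=
      excl (hW.1 1 y2) (subU2 hU.symm (fun v hv => block_disj (Ne.symm h2) hv))
        (cross' hW (show (1:Fin 3) ≠ 0 by decide) y2 x1)
        (cross' hW (show (1:Fin 3) ≠ 2 by decide) y2 x3)
    obtain ⟨p3, q3, hpq3, hBf3, hp3X, hp3Y, hq3Y, hq3X⟩ :=
      excl (hW.1 2 y3) (subU3 hU.symm (fun v hv => block_disj (Ne.symm h3) hv))
        (cross' hW (show (2:Fin 3) ≠ 0 by decide) y3 x1)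
        (cross' hW (show (2:Fin 3) ≠ 1 by decide) y3 x2)
    obtain ⟨r1, s1, hrs1, hBe1, hr1X, hr1Y, hs1Y, hs1X⟩ :=
      excl (hW.1 0 x1) (subU1 hU (fun v hv => block_disj h1 hv))
        (cross' hW (show (0:Fin 3) ≠ 1 by decide) x1 y2)
        (cross' hW (show (0:Fin 3) ≠ 2 by decide) x1 y3)
    obtain ⟨r2, s2, hrs2, hBe2, hr2X, hr2Y, hs2Y, hs2X⟩ :=
      excl (hW.1 1 x2) (subU2 hU (fun v hv => block_disj h2 hv))
        (cross' hW (show (1:Fin 3) ≠ 0 by decide) x2 y1)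
        (cross' hW (show (1:Fin 3) ≠ 2 by decide) x2 y3)
    obtain ⟨r3, s3, hrs3, hBe3, hr3X, hr3Y, hs3Y, hs3X⟩ :=
      excl (hW.1 2 x3) (subU3 hU (fun v hv => block_disj h3 hv))
        (cross' hW (show (2:Fin 3) ≠ 0 by decide) x3 y1)
        (cross' hW (show (2:Fin 3) ≠ 1 by decide) x3 y2)
    -- identifications
    -- p2,p3 ∈ block 0 x1 = {r1,s1}, p2 ∈ B1y2 so p2 ≠ s1, p3 ∈ B2y3 so p3 ≠ r1
    have hp2B1y2 : p2 ∈ block W 1 y2 := by rw [hBf2]; simp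
    have hq2B1y2 : q2 ∈ block W 1 y2 := by rw [hBf2]; simp
    have hp3B2y3 : p3 ∈ block W 2 y3 := by rw [hBf3]; simp
    have hq3B2y3 : q3 ∈ block W 2 y3 := by rw [hBf3]; simp
    have hp1B0y1 : p1 ∈ block W 0 y1 := by rw [hBf1]; simp
    have hq1B0y1 : q1 ∈ block W 0 y1 := by rw [hBf1]; simp
    have hp2e1 : p2 ∈ ({r1, s1} : Set (Fin n × Fin n × Fin n)) := hBe1 ▸ hp2X
    have hp3e1 : p3 ∈ ({r1, s1} : Set (Fin n × Fin n × Fin n)) := hBe1 ▸ hp3X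
    have hp2r1 : p2 = r1 := by
      rcases hp2e1 with h' | h'
      · exact h'
      · exact absurd (h' ▸ hp2B1y2) hs1X
    have hp3s1 : p3 = s1 := by
      rcases hp3e1 with h' | h'
      · exact absurd (h' ▸ hp3B2y3) hr1Y
      · exact h'
    have hp1e2 : p1 ∈ ({r2, s2} : Set (Fin n × Fin n × Fin n)) := hBe2 ▸ hp1X
    have hq3e2 : q3 ∈ ({r2, s2} : Set (Fin n × Fin n × Fin n)) := hBe2 ▸ hq3Y
    have hp1r2 : p1 = r2 := by
      rcases hp1e2 with h' | h'
      · exact h'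
      · exact absurd (h' ▸ hp1B0y1) hs2X
    have hq3s2 : q3 = s2 := by
      rcases hq3e2 with h' | h'
      · exact absurd (h' ▸ hq3B2y3) hr2Y
      · exact h'
    have hq1e3 : q1 ∈ ({r3, s3} : Set (Fin n × Fin n × Fin n)) := hBe3 ▸ hq1Y
    have hq2e3 : q2 ∈ ({r3, s3} : Set (Fin n × Fin n × Fin n)) := hBe3 ▸ hq2Y
    have hq1r3 : q1 = r3 := by
      rcases hq1e3 with h' | h'
      · exact h'
      · exact absurd (h' ▸ hq1B0y1) hs3X
    have hq2s3 : q2 = s3 := by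
      rcases hq2e3 with h' | h'
      · exact absurd (h' ▸ hq2B1y2) hr3Y
      · exact h'
    -- membership of the six in x-blocks
    have hp3B0x1 : p3 ∈ block W 0 x1 := by rw [hBe1, hp3s1]; simp
    have hp2B0x1 : p2 ∈ block W 0 x1 := by rw [hBe1, hp2r1]; simp
    have hp1B1x2 : p1 ∈ block W 1 x2 := by rw [hBe2, hp1r2]; simp
    have hq3B1x2 : q3 ∈ block W 1 x2 := by rw [hBe2, hq3s2]; simp
    have hq1B2x3 : q1 ∈ block W 2 x3 := by rw [hBe3, hq1r3]; simp
    have hq2B2x3 : q2 ∈ block W 2 x3 := by rw [hBe3, hq2s3]; simp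
    -- distinctness (list order: p3, p2, q2, q1, p1, q3)
    have d12 : p3 ≠ p2 := by rw [hp2r1, hp3s1]; exact fun he => hrs1 he.symm
    have d13 : p3 ≠ q2 := fun he => hq2X (he ▸ hp3X)
    have d14 : p3 ≠ q1 := fun he => same_col h3 (he ▸ hq1B2x3) hp3B2y3
    have d15 : p3 ≠ p1 := fun he => same_col h1 (he ▸ hp3B0x1 : p1 ∈ block W 0 x1) hp1B0y1
    have d16 : p3 ≠ q3 := hpq3
    have d23 : p2 ≠ q2 := hpq2
    have d24 : p2 ≠ q1 := fun he => same_col h1 (he ▸ hp2B0x1 : q1 ∈ block W 0 x1) hq1B0y1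
    have d25 : p2 ≠ p1 := fun he => same_col h2 hp1B1x2 (he ▸ hp2B1y2 : p1 ∈ block W 1 y2)
    have d26 : p2 ≠ q3 := fun he => hq3X (he ▸ hp2X)
    have d34 : q2 ≠ q1 := by rw [hq1r3, hq2s3]; exact fun he => hrs3 he.symm
    have d35 : q2 ≠ p1 := fun he => hp1Y (he ▸ hq2Y)
    have d36 : q2 ≠ q3 := fun he => same_col h2 hq3B1x2 (he ▸ hq2B1y2 : q3 ∈ block W 1 y2)
    have d45 : q1 ≠ p1 := fun he => hpq1 he.symm
    have d46 : q1 ≠ q3 := fun he => same_col h3 hq1B2x3 (he ▸ hq3B2y3 : q1 ∈ block W 2 y3)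
    have d56 : p1 ≠ q3 := by rw [hp1r2, hq3s2]; exact hrs2
    -- F2 witnesses (p3, p2, q2, q1, p1, q3)
    refine Or.inr ⟨p3, p2, q2, q1, p1, q3, ?_, block_subset hp3X, block_subset hp2X,
      block_subset hq2Y, block_subset hq1Y, block_subset hp1X, block_subset hq3Y,
      ?_, ?_, ?_, ?_, ?_, ?_, ?_, ?_, ?_⟩
    · simp [d12, d13, d14, d15, d16, d23, d24, d25, d26, d34, d35, d36, d45, d46, d56]
    · exact (mem_block0.1 hp3B0x1).2.trans (mem_block0.1 hp2B0x1).2.symm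
    · exact (mem_block0.1 hq1B0y1).2.trans (mem_block0.1 hp1B0y1).2.symm
    · exact (mem_block1.1 hp2B1y2).2.trans (mem_block1.1 hq2B1y2).2.symm
    · exact (mem_block1.1 hp1B1x2).2.trans (mem_block1.1 hq3B1x2).2.symm
    · exact (mem_block2.1 hq2B2x3).2.trans (mem_block2.1 hq1B2x3).2.symm
    · exact (mem_block2.1 hq3B2y3).2.trans (mem_block2.1 hp3B2y3).2.symm
    · rw [(mem_block0.1 hp3B0x1).2, (mem_block0.1 hq1B0y1).2]; exact h1
    · rw [(mem_block1.1 hp2B1y2).2, (mem_block1.1 hp1B1x2).2]; exact Ne.symm h2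
    · rw [(mem_block2.1 hq2B2x3).2, (mem_block2.1 hq3B2y3).2]; exact h3

end CaseAMain

-- ========== embedding into size n+1 ==========

def share {m : ℕ} (x w : Fin m × Fin m × Fin m) : Prop :=
  x.1 = w.1 ∨ x.2.1 = w.2.1 ∨ x.2.2 = w.2.2

def emb {n : ℕ} (w : Fin n × Fin n × Fin n) : Fin (n+1) × Fin (n+1) × Fin (n+1) :=
  (w.1.castSucc, w.2.1.castSucc, w.2.2.castSucc)

def uvtx (n : ℕ) : Fin (n+1) × Fin (n+1) × Fin (n+1) := (Fin.last n, Fin.last n, Fin.last n)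

def Wext {n : ℕ} (W : Set (Fin n × Fin n × Fin n)) : Set (Fin (n+1) × Fin (n+1) × Fin (n+1)) :=
  emb '' W ∪ {uvtx n}

section Emb
variable {n : ℕ} {W : Set (Fin n × Fin n × Fin n)}

lemma cs_ne_last {m : ℕ} (i : Fin m) : i.castSucc ≠ Fin.last m := (Fin.castSucc_lt_last i).ne

lemma emb_injective : Function.Injective (emb (n := n)) := by
  rintro ⟨a1, a2, a3⟩ ⟨b1, b2, b3⟩ h
  simp [emb, Prod.ext_iff, Fin.castSucc_inj] at h
  simp [Prod.ext_iff, h.1, h.2.1, h.2.2]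

lemma emb_ne_uvtx (w : Fin n × Fin n × Fin n) : emb w ≠ uvtx n := fun h =>
  cs_ne_last w.1 (congrArg Prod.fst h)

lemma uvtx_mem_Wext : uvtx n ∈ Wext W := Or.inr rfl

lemma emb_mem_Wext {w : Fin n × Fin n × Fin n} (hw : w ∈ W) : emb w ∈ Wext W :=
  Or.inl ⟨w, hw, rfl⟩

lemma shareFull {x1 x2 x3 : Fin n} {v : Fin n × Fin n × Fin n} (hv : v ∈ W) :
    share (emb (x1, x2, x3)) (emb v) ↔
      v ∈ block W 0 x1 ∪ block W 1 x2 ∪ block W 2 x3 := by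
  simp [share, emb, mem_block0, mem_block1, mem_block2, hv, eq_comm, or_assoc]

lemma shareS01 {a b : Fin n} {v : Fin n × Fin n × Fin n} (hv : v ∈ W) :
    share ((a.castSucc, b.castSucc, Fin.last n) : Fin (n+1) × Fin (n+1) × Fin (n+1)) (emb v) ↔
      v ∈ block W 0 a ∪ block W 1 b := by
  simp [share, emb, mem_block0, mem_block1, hv, eq_comm, cs_ne_last v.2.2]

lemma shareS02 {a c : Fin n} {v : Fin n × Fin n × Fin n} (hv : v ∈ W) :
    share ((a.castSucc, Fin.last n, c.castSucc) : Fin (n+1) × Fin (n+1) × Fin (n+1)) (emb v) ↔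
      v ∈ block W 0 a ∪ block W 2 c := by
  simp [share, emb, mem_block0, mem_block2, hv, eq_comm, cs_ne_last v.2.1]

lemma shareS12 {b c : Fin n} {v : Fin n × Fin n × Fin n} (hv : v ∈ W) :
    share ((Fin.last n, b.castSucc, c.castSucc) : Fin (n+1) × Fin (n+1) × Fin (n+1)) (emb v) ↔
      v ∈ block W 1 b ∪ block W 2 c := by
  simp [share, emb, mem_block1, mem_block2, hv, eq_comm, cs_ne_last v.1]

lemma shareS0 {a : Fin n} {v : Fin n × Fin n × Fin n} (hv : v ∈ W) :
    share ((a.castSucc, Fin.last n, Fin.last n) : Fin (n+1) × Fin (n+1) × Fin (n+1)) (emb v) ↔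
      v ∈ block W 0 a := by
  simp [share, emb, mem_block0, hv, eq_comm, cs_ne_last v.2.1, cs_ne_last v.2.2]

lemma shareS1 {b : Fin n} {v : Fin n × Fin n × Fin n} (hv : v ∈ W) :
    share ((Fin.last n, b.castSucc, Fin.last n) : Fin (n+1) × Fin (n+1) × Fin (n+1)) (emb v) ↔
      v ∈ block W 1 b := by
  simp [share, emb, mem_block1, hv, eq_comm, cs_ne_last v.1, cs_ne_last v.2.2]

lemma shareS2 {c : Fin n} {v : Fin n × Fin n × Fin n} (hv : v ∈ W) :
    share ((Fin.last n, Fin.last n, c.castSucc) : Fin (n+1) × Fin (n+1) × Fin (n+1)) (emb v) ↔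
      v ∈ block W 2 c := by
  simp [share, emb, mem_block2, hv, eq_comm, cs_ne_last v.1, cs_ne_last v.2.1]

lemma union_eq_of_share {x y : Fin (n+1) × Fin (n+1) × Fin (n+1)} {P Q : Set (Fin n × Fin n × Fin n)}
    (hP : P ⊆ W) (hQ : Q ⊆ W)
    (h1 : ∀ v ∈ W, (share x (emb v) ↔ v ∈ P)) (h2 : ∀ v ∈ W, (share y (emb v) ↔ v ∈ Q))
    (hE : ∀ v ∈ W, (share x (emb v) ↔ share y (emb v))) : P = Q := by
  ext v
  constructor
  · intro hv
    have hw := hP hv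
    exact (h2 v hw).1 ((hE v hw).1 ((h1 v hw).2 hv))
  · intro hv
    have hw := hQ hv
    exact (h1 v hw).1 ((hE v hw).2 ((h2 v hw).2 hv))

lemma shape_of {x : Fin (n+1) × Fin (n+1) × Fin (n+1)}
    (hxu : x.1 = Fin.last n ∨ x.2.1 = Fin.last n ∨ x.2.2 = Fin.last n)
    (hne : x ≠ uvtx n) :
    (∃ a b : Fin n, x = (a.castSucc, b.castSucc, Fin.last n)) ∨
    (∃ a c : Fin n, x = (a.castSucc, Fin.last n, c.castSucc)) ∨
    (∃ b c : Fin n, x = (Fin.last n, b.castSucc, c.castSucc)) ∨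
    (∃ a : Fin n, x = (a.castSucc, Fin.last n, Fin.last n)) ∨
    (∃ b : Fin n, x = (Fin.last n, b.castSucc, Fin.last n)) ∨
    (∃ c : Fin n, x = (Fin.last n, Fin.last n, c.castSucc)) := by
  obtain ⟨u1, u2, u3⟩ := x
  by_cases e1 : u1 = Fin.last n <;> by_cases e2 : u2 = Fin.last n <;>
    by_cases e3 : u3 = Fin.last n
  · exact absurd (by simp [uvtx, e1, e2, e3]) hne
  · obtain ⟨c, rfl⟩ := Fin.exists_castSucc_eq.2 e3
    exact Or.inr (Or.inr (Or.inr (Or.inr (Or.inr ⟨c, by simp [e1, e2]⟩))))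
  · obtain ⟨b, rfl⟩ := Fin.exists_castSucc_eq.2 e2
    exact Or.inr (Or.inr (Or.inr (Or.inr (Or.inl ⟨b, by simp [e1, e3]⟩))))
  · obtain ⟨b, rfl⟩ := Fin.exists_castSucc_eq.2 e2
    obtain ⟨c, rfl⟩ := Fin.exists_castSucc_eq.2 e3
    exact Or.inr (Or.inr (Or.inl ⟨b, c, by simp [e1]⟩))
  · obtain ⟨a, rfl⟩ := Fin.exists_castSucc_eq.2 e1
    exact Or.inr (Or.inr (Or.inr (Or.inl ⟨a, by simp [e2, e3]⟩)))
  · obtain ⟨a, rfl⟩ := Fin.exists_castSucc_eq.2 e1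
    obtain ⟨c, rfl⟩ := Fin.exists_castSucc_eq.2 e3
    exact Or.inr (Or.inl ⟨a, c, by simp [e2]⟩)
  · obtain ⟨a, rfl⟩ := Fin.exists_castSucc_eq.2 e1
    obtain ⟨b, rfl⟩ := Fin.exists_castSucc_eq.2 e2
    exact Or.inl ⟨a, b, by simp [e3]⟩
  · simp [e1, e2, e3] at hxu

end Emb

section Forbidden
variable {n : ℕ} {W : Set (Fin n × Fin n × Fin n)}

lemma forbidden_of_unresolved (hW : TwoBasic W)
    {x y : Fin (n+1) × Fin (n+1) × Fin (n+1)} (hx : x ∉ Wext W) (hy : y ∉ Wext W)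
    (hxy : x ≠ y) (hsh : ∀ w ∈ Wext W, (share x w ↔ share y w)) :
    HasF1 W ∨ HasF2 W ∨ HasF3 W := by
  have hu : share x (uvtx n) ↔ share y (uvtx n) := hsh _ uvtx_mem_Wext
  have hE : ∀ v ∈ W, (share x (emb v) ↔ share y (emb v)) := fun v hv =>
    hsh _ (emb_mem_Wext hv)
  have sub2 : ∀ (i j : Fin 3) (a b : Fin n), block W i a ∪ block W j b ⊆ W :=
    fun i j a b => Set.union_subset block_subset block_subset
  by_cases hxu : share x (uvtx n)
  · -- both x and y contain a last coordinate
    have hyu : share y (uvtx n) := hu.1 hxu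
    have hxnu : x ≠ uvtx n := fun h => hx (h ▸ uvtx_mem_Wext)
    have hynu : y ≠ uvtx n := fun h => hy (h ▸ uvtx_mem_Wext)
    have hxs := shape_of hxu hxnu
    have hys := shape_of hyu hynu
    rcases hxs with ⟨a, b, rfl⟩ | ⟨a, c, rfl⟩ | ⟨b, c, rfl⟩ | ⟨a, rfl⟩ | ⟨b, rfl⟩ | ⟨c, rfl⟩ <;>
      rcases hys with ⟨a', b', rfl⟩ | ⟨a', c', rfl⟩ | ⟨b', c', rfl⟩ | ⟨a', rfl⟩ | ⟨b', rfl⟩ |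
        ⟨c', rfl⟩
    -- x = S01
    · have hPQ : block W 0 a ∪ block W 1 b = block W 0 a' ∪ block W 1 b' :=
        union_eq_of_share (sub2 _ _ _ _) (sub2 _ _ _ _)
          (fun v hv => shareS01 hv) (fun v hv => shareS01 hv) hE
      obtain ⟨ha, hb⟩ := pairSamePair hW (show (0:Fin 3) ≠ 1 by decide) hPQ
      exact absurd (by rw [ha, hb]) hxy
    · have hPQ : block W 0 a ∪ block W 1 b = block W 0 a' ∪ block W 2 c' :=
        union_eq_of_share (sub2 _ _ _ _) (sub2 _ _ _ _)
          (fun v hv => shareS01 hv) (fun v hv => shareS02 hv) hE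
      exact Or.inr (Or.inr (Le0 hW hPQ))
    · have hPQ : block W 0 a ∪ block W 1 b = block W 1 b' ∪ block W 2 c' :=
        union_eq_of_share (sub2 _ _ _ _) (sub2 _ _ _ _)
          (fun v hv => shareS01 hv) (fun v hv => shareS12 hv) hE
      exact Or.inr (Or.inr (Le1 hW hPQ))
    · have hPQ : block W 0 a ∪ block W 1 b = block W 0 a' :=
        union_eq_of_share (sub2 _ _ _ _) block_subset
          (fun v hv => shareS01 hv) (fun v hv => shareS0 hv) hE
      exact (subset_contra hW (show (1:Fin 3) ≠ 0 by decide)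
        (fun v hv => hPQ ▸ Set.mem_union_right _ hv)).elim
    · have hPQ : block W 0 a ∪ block W 1 b = block W 1 b' :=
        union_eq_of_share (sub2 _ _ _ _) block_subset
          (fun v hv => shareS01 hv) (fun v hv => shareS1 hv) hE
      exact (subset_contra hW (show (0:Fin 3) ≠ 1 by decide)
        (fun v hv => hPQ ▸ Set.mem_union_left _ hv)).elim
    · have hPQ : block W 0 a ∪ block W 1 b = block W 2 c' :=
        union_eq_of_share (sub2 _ _ _ _) block_subset
          (fun v hv => shareS01 hv) (fun v hv => shareS2 hv) hE
      exact (subset_contra hW (show (0:Fin 3) ≠ 2 by decide)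
        (fun v hv => hPQ ▸ Set.mem_union_left _ hv)).elim
    -- x = S02
    · have hPQ : block W 0 a' ∪ block W 1 b' = block W 0 a ∪ block W 2 c :=
        union_eq_of_share (sub2 _ _ _ _) (sub2 _ _ _ _)
          (fun v hv => shareS01 hv) (fun v hv => shareS02 hv) (fun v hv => (hE v hv).symm)
      exact Or.inr (Or.inr (Le0 hW hPQ))
    · have hPQ : block W 0 a ∪ block W 2 c = block W 0 a' ∪ block W 2 c' :=
        union_eq_of_share (sub2 _ _ _ _) (sub2 _ _ _ _)
          (fun v hv => shareS02 hv) (fun v hv => shareS02 hv) hE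
      obtain ⟨ha, hc⟩ := pairSamePair hW (show (0:Fin 3) ≠ 2 by decide) hPQ
      exact absurd (by rw [ha, hc]) hxy
    · have hPQ : block W 0 a ∪ block W 2 c = block W 1 b' ∪ block W 2 c' :=
        union_eq_of_share (sub2 _ _ _ _) (sub2 _ _ _ _)
          (fun v hv => shareS02 hv) (fun v hv => shareS12 hv) hE
      exact Or.inr (Or.inr (Le2 hW hPQ))
    · have hPQ : block W 0 a ∪ block W 2 c = block W 0 a' :=
        union_eq_of_share (sub2 _ _ _ _) block_subset
          (fun v hv => shareS02 hv) (fun v hv => shareS0 hv) hE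
      exact (subset_contra hW (show (2:Fin 3) ≠ 0 by decide)
        (fun v hv => hPQ ▸ Set.mem_union_right _ hv)).elim
    · have hPQ : block W 0 a ∪ block W 2 c = block W 1 b' :=
        union_eq_of_share (sub2 _ _ _ _) block_subset
          (fun v hv => shareS02 hv) (fun v hv => shareS1 hv) hE
      exact (subset_contra hW (show (0:Fin 3) ≠ 1 by decide)
        (fun v hv => hPQ ▸ Set.mem_union_left _ hv)).elim
    · have hPQ : block W 0 a ∪ block W 2 c = block W 2 c' :=
        union_eq_of_share (sub2 _ _ _ _) block_subset
          (fun v hv => shareS02 hv) (fun v hv => shareS2 hv) hE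
      exact (subset_contra hW (show (0:Fin 3) ≠ 2 by decide)
        (fun v hv => hPQ ▸ Set.mem_union_left _ hv)).elim
    -- x = S12
    · have hPQ : block W 0 a' ∪ block W 1 b' = block W 1 b ∪ block W 2 c :=
        union_eq_of_share (sub2 _ _ _ _) (sub2 _ _ _ _)
          (fun v hv => shareS01 hv) (fun v hv => shareS12 hv) (fun v hv => (hE v hv).symm)
      exact Or.inr (Or.inr (Le1 hW hPQ))
    · have hPQ : block W 0 a' ∪ block W 2 c' = block W 1 b ∪ block W 2 c :=
        union_eq_of_share (sub2 _ _ _ _) (sub2 _ _ _ _)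
          (fun v hv => shareS02 hv) (fun v hv => shareS12 hv) (fun v hv => (hE v hv).symm)
      exact Or.inr (Or.inr (Le2 hW hPQ))
    · have hPQ : block W 1 b ∪ block W 2 c = block W 1 b' ∪ block W 2 c' :=
        union_eq_of_share (sub2 _ _ _ _) (sub2 _ _ _ _)
          (fun v hv => shareS12 hv) (fun v hv => shareS12 hv) hE
      obtain ⟨hb, hc⟩ := pairSamePair hW (show (1:Fin 3) ≠ 2 by decide) hPQ
      exact absurd (by rw [hb, hc]) hxy
    · have hPQ : block W 1 b ∪ block W 2 c = block W 0 a' :=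
        union_eq_of_share (sub2 _ _ _ _) block_subset
          (fun v hv => shareS12 hv) (fun v hv => shareS0 hv) hE
      exact (subset_contra hW (show (1:Fin 3) ≠ 0 by decide)
        (fun v hv => hPQ ▸ Set.mem_union_left _ hv)).elim
    · have hPQ : block W 1 b ∪ block W 2 c = block W 1 b' :=
        union_eq_of_share (sub2 _ _ _ _) block_subset
          (fun v hv => shareS12 hv) (fun v hv => shareS1 hv) hE
      exact (subset_contra hW (show (2:Fin 3) ≠ 1 by decide)
        (fun v hv => hPQ ▸ Set.mem_union_right _ hv)).elim
    · have hPQ : block W 1 b ∪ block W 2 c = block W 2 c' :=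
        union_eq_of_share (sub2 _ _ _ _) block_subset
          (fun v hv => shareS12 hv) (fun v hv => shareS2 hv) hE
      exact (subset_contra hW (show (1:Fin 3) ≠ 2 by decide)
        (fun v hv => hPQ ▸ Set.mem_union_left _ hv)).elim
    -- x = S0
    · have hPQ : block W 0 a' ∪ block W 1 b' = block W 0 a :=
        union_eq_of_share (sub2 _ _ _ _) block_subset
          (fun v hv => shareS01 hv) (fun v hv => shareS0 hv) (fun v hv => (hE v hv).symm)
      exact (subset_contra hW (show (1:Fin 3) ≠ 0 by decide)
        (fun v hv => hPQ ▸ Set.mem_union_right _ hv)).elim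
    · have hPQ : block W 0 a' ∪ block W 2 c' = block W 0 a :=
        union_eq_of_share (sub2 _ _ _ _) block_subset
          (fun v hv => shareS02 hv) (fun v hv => shareS0 hv) (fun v hv => (hE v hv).symm)
      exact (subset_contra hW (show (2:Fin 3) ≠ 0 by decide)
        (fun v hv => hPQ ▸ Set.mem_union_right _ hv)).elim
    · have hPQ : block W 1 b' ∪ block W 2 c' = block W 0 a :=
        union_eq_of_share (sub2 _ _ _ _) block_subset
          (fun v hv => shareS12 hv) (fun v hv => shareS0 hv) (fun v hv => (hE v hv).symm)
      exact (subset_contra hW (show (1:Fin 3) ≠ 0 by decide)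
        (fun v hv => hPQ ▸ Set.mem_union_left _ hv)).elim
    · have hPQ : block W 0 a = block W 0 a' :=
        union_eq_of_share block_subset block_subset
          (fun v hv => shareS0 hv) (fun v hv => shareS0 hv) hE
      exact absurd (by rw [sameSingleton hW hPQ]) hxy
    · have hPQ : block W 0 a = block W 1 b' :=
        union_eq_of_share block_subset block_subset
          (fun v hv => shareS0 hv) (fun v hv => shareS1 hv) hE
      exact (crossSingleton hW (show (0:Fin 3) ≠ 1 by decide) hPQ).elim
    · have hPQ : block W 0 a = block W 2 c' :=
        union_eq_of_share block_subset block_subset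
          (fun v hv => shareS0 hv) (fun v hv => shareS2 hv) hE
      exact (crossSingleton hW (show (0:Fin 3) ≠ 2 by decide) hPQ).elim
    -- x = S1
    · have hPQ : block W 0 a' ∪ block W 1 b' = block W 1 b :=
        union_eq_of_share (sub2 _ _ _ _) block_subset
          (fun v hv => shareS01 hv) (fun v hv => shareS1 hv) (fun v hv => (hE v hv).symm)
      exact (subset_contra hW (show (0:Fin 3) ≠ 1 by decide)
        (fun v hv => hPQ ▸ Set.mem_union_left _ hv)).elim
    · have hPQ : block W 0 a' ∪ block W 2 c' = block W 1 b :=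
        union_eq_of_share (sub2 _ _ _ _) block_subset
          (fun v hv => shareS02 hv) (fun v hv => shareS1 hv) (fun v hv => (hE v hv).symm)
      exact (subset_contra hW (show (0:Fin 3) ≠ 1 by decide)
        (fun v hv => hPQ ▸ Set.mem_union_left _ hv)).elim
    · have hPQ : block W 1 b' ∪ block W 2 c' = block W 1 b :=
        union_eq_of_share (sub2 _ _ _ _) block_subset
          (fun v hv => shareS12 hv) (fun v hv => shareS1 hv) (fun v hv => (hE v hv).symm)
      exact (subset_contra hW (show (2:Fin 3) ≠ 1 by decide)
        (fun v hv => hPQ ▸ Set.mem_union_right _ hv)).elim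
    · have hPQ : block W 1 b = block W 0 a' :=
        union_eq_of_share block_subset block_subset
          (fun v hv => shareS1 hv) (fun v hv => shareS0 hv) hE
      exact (crossSingleton hW (show (1:Fin 3) ≠ 0 by decide) hPQ).elim
    · have hPQ : block W 1 b = block W 1 b' :=
        union_eq_of_share block_subset block_subset
          (fun v hv => shareS1 hv) (fun v hv => shareS1 hv) hE
      exact absurd (by rw [sameSingleton hW hPQ]) hxy
    · have hPQ : block W 1 b = block W 2 c' :=
        union_eq_of_share block_subset block_subset
          (fun v hv => shareS1 hv) (fun v hv => shareS2 hv) hE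
      exact (crossSingleton hW (show (1:Fin 3) ≠ 2 by decide) hPQ).elim
    -- x = S2
    · have hPQ : block W 0 a' ∪ block W 1 b' = block W 2 c :=
        union_eq_of_share (sub2 _ _ _ _) block_subset
          (fun v hv => shareS01 hv) (fun v hv => shareS2 hv) (fun v hv => (hE v hv).symm)
      exact (subset_contra hW (show (0:Fin 3) ≠ 2 by decide)
        (fun v hv => hPQ ▸ Set.mem_union_left _ hv)).elim
    · have hPQ : block W 0 a' ∪ block W 2 c' = block W 2 c :=
        union_eq_of_share (sub2 _ _ _ _) block_subset
          (fun v hv => shareS02 hv) (fun v hv => shareS2 hv) (fun v hv => (hE v hv).symm)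
      exact (subset_contra hW (show (0:Fin 3) ≠ 2 by decide)
        (fun v hv => hPQ ▸ Set.mem_union_left _ hv)).elim
    · have hPQ : block W 1 b' ∪ block W 2 c' = block W 2 c :=
        union_eq_of_share (sub2 _ _ _ _) block_subset
          (fun v hv => shareS12 hv) (fun v hv => shareS2 hv) (fun v hv => (hE v hv).symm)
      exact (subset_contra hW (show (1:Fin 3) ≠ 2 by decide)
        (fun v hv => hPQ ▸ Set.mem_union_left _ hv)).elim
    · have hPQ : block W 2 c = block W 0 a' :=
        union_eq_of_share block_subset block_subset
          (fun v hv => shareS2 hv) (fun v hv => shareS0 hv) hE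
      exact (crossSingleton hW (show (2:Fin 3) ≠ 0 by decide) hPQ).elim
    · have hPQ : block W 2 c = block W 1 b' :=
        union_eq_of_share block_subset block_subset
          (fun v hv => shareS2 hv) (fun v hv => shareS1 hv) hE
      exact (crossSingleton hW (show (2:Fin 3) ≠ 1 by decide) hPQ).elim
    · have hPQ : block W 2 c = block W 2 c' :=
        union_eq_of_share block_subset block_subset
          (fun v hv => shareS2 hv) (fun v hv => shareS2 hv) hE
      exact absurd (by rw [sameSingleton hW hPQ]) hxy
  · -- neither x nor y contains a last coordinate
    have hyu : ¬ share y (uvtx n) := fun h => hxu (hu.2 h)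
    obtain ⟨u1, u2, u3⟩ := x
    obtain ⟨v1, v2, v3⟩ := y
    obtain ⟨x1, rfl⟩ := Fin.exists_castSucc_eq.2
      (show u1 ≠ Fin.last n from fun h => hxu (Or.inl h))
    obtain ⟨x2, rfl⟩ := Fin.exists_castSucc_eq.2
      (show u2 ≠ Fin.last n from fun h => hxu (Or.inr (Or.inl h)))
    obtain ⟨x3, rfl⟩ := Fin.exists_castSucc_eq.2
      (show u3 ≠ Fin.last n from fun h => hxu (Or.inr (Or.inr h)))
    obtain ⟨y1, rfl⟩ := Fin.exists_castSucc_eq.2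
      (show v1 ≠ Fin.last n from fun h => hyu (Or.inl h))
    obtain ⟨y2, rfl⟩ := Fin.exists_castSucc_eq.2
      (show v2 ≠ Fin.last n from fun h => hyu (Or.inr (Or.inl h)))
    obtain ⟨y3, rfl⟩ := Fin.exists_castSucc_eq.2
      (show v3 ≠ Fin.last n from fun h => hyu (Or.inr (Or.inr h)))
    have hxW : ((x1, x2, x3) : Fin n × Fin n × Fin n) ∉ W := fun h => hx (emb_mem_Wext h)
    have hyW : ((y1, y2, y3) : Fin n × Fin n × Fin n) ∉ W := fun h => hy (emb_mem_Wext h)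
    have hne' : ((x1, x2, x3) : Fin n × Fin n × Fin n) ≠ (y1, y2, y3) := fun h =>
      hxy (congrArg emb h)
    have hU : block W 0 x1 ∪ block W 1 x2 ∪ block W 2 x3
        = block W 0 y1 ∪ block W 1 y2 ∪ block W 2 y3 :=
      union_eq_of_share
        (Set.union_subset (Set.union_subset block_subset block_subset) block_subset)
        (Set.union_subset (Set.union_subset block_subset block_subset) block_subset)
        (fun v hv => shareFull hv) (fun v hv => shareFull hv) hE
    rcases caseA hW hxW hyW hne' hU with h | h
    · exact Or.inl h
    · exact Or.inr (Or.inl h)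

end Forbidden

section Pairs
variable {n : ℕ} {W : Set (Fin n × Fin n × Fin n)}

lemma unres_F3 (hW : TwoBasic W) (h : HasF3 W) :
    ∃ x y : Fin (n+1) × Fin (n+1) × Fin (n+1), x ∉ Wext W ∧ y ∉ Wext W ∧ x ≠ y ∧
      ∀ w ∈ Wext W, (share x w ↔ share y w) := by
  obtain ⟨w1, w2, w3, hpw, hw1, hw2, hw3, h12, h23, h31⟩ := h
  simp only [List.pairwise_cons, List.mem_cons, List.mem_singleton, List.not_mem_nil] at hpw
  obtain ⟨f1, f2, -⟩ := hpw
  have d12 : w1 ≠ w2 := f1 w2 (by tauto)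
  have d13 : w1 ≠ w3 := f1 w3 (by tauto)
  have d23 : w2 ≠ w3 := f2 w3 (by tauto)
  have hB0 : block W 0 w1.1 = {w1, w2} :=
    eq_pair (hW.1 0 w1.1) d12 (mem_block0.2 ⟨hw1, rfl⟩) (mem_block0.2 ⟨hw2, h12.symm⟩)
  have hB1 : block W 1 w2.2.1 = {w2, w3} :=
    eq_pair (hW.1 1 w2.2.1) d23 (mem_block1.2 ⟨hw2, rfl⟩) (mem_block1.2 ⟨hw3, h23.symm⟩)
  have hB2 : block W 2 w3.2.2 = {w3, w1} :=
    eq_pair (hW.1 2 w3.2.2) (Ne.symm d13) (mem_block2.2 ⟨hw3, rfl⟩) (mem_block2.2 ⟨hw1, h31.symm⟩)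
  refine ⟨(w1.1.castSucc, w2.2.1.castSucc, Fin.last n),
    (w1.1.castSucc, Fin.last n, w3.2.2.castSucc), ?_, ?_, ?_, ?_⟩
  · rintro (⟨v, hv, he⟩ | he)
    · exact cs_ne_last v.2.2 (congrArg (fun z => z.2.2) he)
    · exact cs_ne_last w1.1 (congrArg (fun z => z.1) he)
  · rintro (⟨v, hv, he⟩ | he)
    · exact cs_ne_last v.2.1 (congrArg (fun z => z.2.1) he)
    · exact cs_ne_last w1.1 (congrArg (fun z => z.1) he)
  · intro he
    exact cs_ne_last w2.2.1 (congrArg (fun z => z.2.1) he)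
  · rintro w (⟨v, hv, rfl⟩ | rfl)
    · rw [shareS01 hv, shareS02 hv, hB0, hB1, hB2]
      simp only [Set.mem_union, Set.mem_insert_iff, Set.mem_singleton_iff]
      tauto
    · constructor
      · intro _; exact Or.inr (Or.inl rfl)
      · intro _; exact Or.inr (Or.inr rfl)

lemma unres_F2 (hW : TwoBasic W) (h : HasF2 W) :
    ∃ x y : Fin (n+1) × Fin (n+1) × Fin (n+1), x ∉ Wext W ∧ y ∉ Wext W ∧ x ≠ y ∧
      ∀ w ∈ Wext W, (share x w ↔ share y w) := by
  obtain ⟨w1, w2, w3, w4, w5, w6, hpw, hw1, hw2, hw3, hw4, hw5, hw6,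
    h12, h45, h23, h56, h34, h61, n14, n25, n36⟩ := h
  simp only [List.pairwise_cons, List.mem_cons, List.mem_singleton, List.not_mem_nil,
    or_false] at hpw
  obtain ⟨f1, f2, f3, f4, f5, -⟩ := hpw
  have d12 : w1 ≠ w2 := f1 w2 (by tauto)
  have d13 : w1 ≠ w3 := f1 w3 (by tauto)
  have d14 : w1 ≠ w4 := f1 w4 (by tauto)
  have d15 : w1 ≠ w5 := f1 w5 (by tauto)
  have d16 : w1 ≠ w6 := f1 w6 (by tauto)
  have d23 : w2 ≠ w3 := f2 w3 (by tauto)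
  have d24 : w2 ≠ w4 := f2 w4 (by tauto)
  have d25 : w2 ≠ w5 := f2 w5 (by tauto)
  have d26 : w2 ≠ w6 := f2 w6 (by tauto)
  have d34 : w3 ≠ w4 := f3 w4 (by tauto)
  have d35 : w3 ≠ w5 := f3 w5 (by tauto)
  have d36 : w3 ≠ w6 := f3 w6 (by tauto)
  have d45 : w4 ≠ w5 := f4 w5 (by tauto)
  have d46 : w4 ≠ w6 := f4 w6 (by tauto)
  have d56 : w5 ≠ w6 := f5 w6 (by tauto)
  have hB0x : block W 0 w4.1 = {w4, w5} :=
    eq_pair (hW.1 0 w4.1) d45 (mem_block0.2 ⟨hw4, rfl⟩) (mem_block0.2 ⟨hw5, h45.symm⟩)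
  have hB0y : block W 0 w1.1 = {w1, w2} :=
    eq_pair (hW.1 0 w1.1) d12 (mem_block0.2 ⟨hw1, rfl⟩) (mem_block0.2 ⟨hw2, h12.symm⟩)
  have hB1x : block W 1 w2.2.1 = {w2, w3} :=
    eq_pair (hW.1 1 w2.2.1) d23 (mem_block1.2 ⟨hw2, rfl⟩) (mem_block1.2 ⟨hw3, h23.symm⟩)
  have hB1y : block W 1 w5.2.1 = {w5, w6} :=
    eq_pair (hW.1 1 w5.2.1) d56 (mem_block1.2 ⟨hw5, rfl⟩) (mem_block1.2 ⟨hw6, h56.symm⟩)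
  have hB2x : block W 2 w6.2.2 = {w6, w1} :=
    eq_pair (hW.1 2 w6.2.2) (Ne.symm d16) (mem_block2.2 ⟨hw6, rfl⟩) (mem_block2.2 ⟨hw1, h61.symm⟩)
  have hB2y : block W 2 w3.2.2 = {w3, w4} :=
    eq_pair (hW.1 2 w3.2.2) d34 (mem_block2.2 ⟨hw3, rfl⟩) (mem_block2.2 ⟨hw4, h34.symm⟩)
  refine ⟨emb (w4.1, w2.2.1, w6.2.2), emb (w1.1, w5.2.1, w3.2.2), ?_, ?_, ?_, ?_⟩
  · rintro (⟨v, hv, he⟩ | he)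
    · have hev : v = ((w4.1, w2.2.1, w6.2.2) : Fin n × Fin n × Fin n) := emb_injective he
      have hm0 : v ∈ block W 0 w4.1 := mem_block0.2 ⟨hv, congrArg (fun z => z.1) hev⟩
      have hm1 : v ∈ block W 1 w2.2.1 := mem_block1.2 ⟨hv, congrArg (fun z => z.2.1) hev⟩
      rw [hB0x] at hm0; rw [hB1x] at hm1
      rcases hm0 with rfl | rfl <;> rcases hm1 with he | he
      · exact d24 he.symm
      · exact d34 he.symm
      · exact d25 he.symm
      · exact d35 he.symm
    · exact emb_ne_uvtx _ he
  · rintro (⟨v, hv, he⟩ | he)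
    · have hev : v = ((w1.1, w5.2.1, w3.2.2) : Fin n × Fin n × Fin n) := emb_injective he
      have hm0 : v ∈ block W 0 w1.1 := mem_block0.2 ⟨hv, congrArg (fun z => z.1) hev⟩
      have hm1 : v ∈ block W 1 w5.2.1 := mem_block1.2 ⟨hv, congrArg (fun z => z.2.1) hev⟩
      rw [hB0y] at hm0; rw [hB1y] at hm1
      rcases hm0 with rfl | rfl <;> rcases hm1 with he | he
      · exact d15 he
      · exact d16 he
      · exact d25 he
      · exact d26 he
    · exact emb_ne_uvtx _ he
  · intro he
    have : w4.1.castSucc = w1.1.castSucc := congrArg (fun z => z.1) he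
    rw [Fin.castSucc_inj] at this
    exact n14 this.symm
  · rintro w (⟨v, hv, rfl⟩ | rfl)
    · rw [shareFull hv, shareFull hv, hB0x, hB0y, hB1x, hB1y, hB2x, hB2y]
      simp only [Set.mem_union, Set.mem_insert_iff, Set.mem_singleton_iff]
      tauto
    · constructor
      · rintro (he | he | he) <;> exact absurd he (cs_ne_last _)
      · rintro (he | he | he) <;> exact absurd he (cs_ne_last _)

end Pairs

section F1Pair
variable {n : ℕ} {W : Set (Fin n × Fin n × Fin n)}

lemma fin3 : ∀ k : Fin 3, k = 0 ∨ k = 1 ∨ k = 2 := by decide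

lemma shareG (σ : Equiv.Perm (Fin 3)) (p q r : Fin n) (gfun : Fin 3 → Fin (n+1))
    (h0 : gfun (σ 0) = p.castSucc) (h1 : gfun (σ 1) = q.castSucc)
    (h2 : gfun (σ 2) = r.castSucc) (v : Fin n × Fin n × Fin n) :
    (gfun 0 = v.1.castSucc ∨ gfun 1 = v.2.1.castSucc ∨ gfun 2 = v.2.2.castSucc) ↔
    (coord (σ 0) v = p ∨ coord (σ 1) v = q ∨ coord (σ 2) v = r) := by
  have step1 : (gfun 0 = v.1.castSucc ∨ gfun 1 = v.2.1.castSucc ∨ gfun 2 = v.2.2.castSucc) ↔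
      ∃ i, gfun i = (coord i v).castSucc := by
    constructor
    · rintro (h | h | h)
      · exact ⟨0, h⟩
      · exact ⟨1, h⟩
      · exact ⟨2, h⟩
    · rintro ⟨i, h⟩
      rcases fin3 i with rfl | rfl | rfl
      · exact Or.inl h
      · exact Or.inr (Or.inl h)
      · exact Or.inr (Or.inr h)
  have step2 : (∃ i, gfun i = (coord i v).castSucc) ↔
      ∃ j, gfun (σ j) = (coord (σ j) v).castSucc := by
    constructor
    · rintro ⟨i, h⟩
      exact ⟨σ.symm i, by rwa [Equiv.apply_symm_apply]⟩
    · rintro ⟨j, h⟩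
      exact ⟨σ j, h⟩
  rw [step1, step2]
  constructor
  · rintro ⟨j, h⟩
    rcases fin3 j with rfl | rfl | rfl
    · rw [h0] at h; exact Or.inl (Fin.castSucc_inj.1 h).symm
    · rw [h1] at h; exact Or.inr (Or.inl (Fin.castSucc_inj.1 h).symm)
    · rw [h2] at h; exact Or.inr (Or.inr (Fin.castSucc_inj.1 h).symm)
  · rintro (h | h | h)
    · exact ⟨0, by rw [h0, h]⟩
    · exact ⟨1, by rw [h1, h]⟩
    · exact ⟨2, by rw [h2, h]⟩

lemma unres_F1 (hW : TwoBasic W) (h : HasF1 W) :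
    ∃ x y : Fin (n+1) × Fin (n+1) × Fin (n+1), x ∉ Wext W ∧ y ∉ Wext W ∧ x ≠ y ∧
      ∀ w ∈ Wext W, (share x w ↔ share y w) := by
  obtain ⟨σ, a, b, c, d, w1, w2, w3, w4, hab, hpw, hBa, hBb, hBc, hBd⟩ := h
  simp only [List.pairwise_cons, List.mem_cons, List.mem_singleton, List.not_mem_nil,
    or_false] at hpw
  obtain ⟨f1, f2, f3, -⟩ := hpw
  have d12 : w1 ≠ w2 := f1 w2 (by tauto)
  have d13 : w1 ≠ w3 := f1 w3 (by tauto)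
  have d14 : w1 ≠ w4 := f1 w4 (by tauto)
  have d23 : w2 ≠ w3 := f2 w3 (by tauto)
  have d24 : w2 ≠ w4 := f2 w4 (by tauto)
  have d34 : w3 ≠ w4 := f3 w4 (by tauto)
  have hσ01 : σ 0 ≠ σ 1 := fun he => (by decide : (0 : Fin 3) ≠ 1) (σ.injective he)
  have hσ02 : σ 0 ≠ σ 2 := fun he => (by decide : (0 : Fin 3) ≠ 2) (σ.injective he)
  have hσ12 : σ 1 ≠ σ 2 := fun he => (by decide : (1 : Fin 3) ≠ 2) (σ.injective he)
  set g : Fin 3 → Fin (n+1) := fun i =>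
    if i = σ 0 then a.castSucc else if i = σ 1 then c.castSucc else d.castSucc with hgdef
  set g' : Fin 3 → Fin (n+1) := fun i =>
    if i = σ 0 then b.castSucc else if i = σ 1 then c.castSucc else d.castSucc with hg'def
  have hg0 : g (σ 0) = a.castSucc := by simp [hgdef]
  have hg1 : g (σ 1) = c.castSucc := by simp [hgdef, Ne.symm hσ01]
  have hg2 : g (σ 2) = d.castSucc := by simp [hgdef, Ne.symm hσ02, Ne.symm hσ12]
  have hg'0 : g' (σ 0) = b.castSucc := by simp [hg'def]
  have hg'1 : g' (σ 1) = c.castSucc := by simp [hg'def, Ne.symm hσ01]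
  have hg'2 : g' (σ 2) = d.castSucc := by simp [hg'def, Ne.symm hσ02, Ne.symm hσ12]
  have hglast : ∀ i, g i ≠ Fin.last n := by
    intro i
    obtain ⟨j, rfl⟩ := σ.surjective i
    rcases fin3 j with rfl | rfl | rfl
    · rw [hg0]; exact cs_ne_last a
    · rw [hg1]; exact cs_ne_last c
    · rw [hg2]; exact cs_ne_last d
  have hg'last : ∀ i, g' i ≠ Fin.last n := by
    intro i
    obtain ⟨j, rfl⟩ := σ.surjective i
    rcases fin3 j with rfl | rfl | rfl
    · rw [hg'0]; exact cs_ne_last b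
    · rw [hg'1]; exact cs_ne_last c
    · rw [hg'2]; exact cs_ne_last d
  refine ⟨(g 0, g 1, g 2), (g' 0, g' 1, g' 2), ?_, ?_, ?_, ?_⟩
  · rintro (⟨v, hv, he⟩ | he)
    · -- v matches all three coordinates of x
      have hgv : ∀ i, g i = (coord i v).castSucc := by
        intro i
        rcases fin3 i with rfl | rfl | rfl
        · exact (congrArg (fun z => z.1) he).symm
        · exact (congrArg (fun z => z.2.1) he).symm
        · exact (congrArg (fun z => z.2.2) he).symm
      have hva : v ∈ block W (σ 0) a :=
        ⟨hv, (Fin.castSucc_inj.1 ((hg0.symm).trans (hgv (σ 0)))).symm⟩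
      have hvc : v ∈ block W (σ 1) c :=
        ⟨hv, (Fin.castSucc_inj.1 ((hg1.symm).trans (hgv (σ 1)))).symm⟩
      have hvd : v ∈ block W (σ 2) d :=
        ⟨hv, (Fin.castSucc_inj.1 ((hg2.symm).trans (hgv (σ 2)))).symm⟩
      rw [hBa] at hva; rw [hBc] at hvc; rw [hBd] at hvd
      rcases hva with hh | hh
      · rcases hvc with he' | he'
        · exact d12 (hh.symm.trans he')
        · exact d13 (hh.symm.trans he')
      · rcases hvd with he' | he'
        · exact d12 (he'.symm.trans hh)
        · exact d24 (hh.symm.trans he')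
    · exact hglast 0 (congrArg (fun z => z.1) he)
  · rintro (⟨v, hv, he⟩ | he)
    · have hgv : ∀ i, g' i = (coord i v).castSucc := by
        intro i
        rcases fin3 i with rfl | rfl | rfl
        · exact (congrArg (fun z => z.1) he).symm
        · exact (congrArg (fun z => z.2.1) he).symm
        · exact (congrArg (fun z => z.2.2) he).symm
      have hvb : v ∈ block W (σ 0) b :=
        ⟨hv, (Fin.castSucc_inj.1 ((hg'0.symm).trans (hgv (σ 0)))).symm⟩
      have hvc : v ∈ block W (σ 1) c :=
        ⟨hv, (Fin.castSucc_inj.1 ((hg'1.symm).trans (hgv (σ 1)))).symm⟩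
      have hvd : v ∈ block W (σ 2) d :=
        ⟨hv, (Fin.castSucc_inj.1 ((hg'2.symm).trans (hgv (σ 2)))).symm⟩
      rw [hBb] at hvb; rw [hBc] at hvc; rw [hBd] at hvd
      rcases hvb with hh | hh
      · rcases hvd with he' | he'
        · exact d13 (he'.symm.trans hh)
        · exact d34 (hh.symm.trans he')
      · rcases hvc with he' | he'
        · exact d24 (he'.symm.trans hh)
        · exact d34 (he'.symm.trans hh)
    · exact hg'last 0 (congrArg (fun z => z.1) he)
  · intro he
    have hgg : ∀ i, g i = g' i := by
      intro i
      rcases fin3 i with rfl | rfl | rfl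
      · exact congrArg (fun z => z.1) he
      · exact congrArg (fun z => z.2.1) he
      · exact congrArg (fun z => z.2.2) he
    have := (hg0.symm.trans (hgg (σ 0))).trans hg'0
    rw [Fin.castSucc_inj] at this
    exact hab this
  · rintro w (⟨v, hv, rfl⟩ | rfl)
    · have hx : share ((g 0, g 1, g 2) : Fin (n+1) × Fin (n+1) × Fin (n+1)) (emb v) ↔
          (coord (σ 0) v = a ∨ coord (σ 1) v = c ∨ coord (σ 2) v = d) :=
        shareG σ a c d g hg0 hg1 hg2 v
      have hy : share ((g' 0, g' 1, g' 2) : Fin (n+1) × Fin (n+1) × Fin (n+1)) (emb v) ↔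
          (coord (σ 0) v = b ∨ coord (σ 1) v = c ∨ coord (σ 2) v = d) :=
        shareG σ b c d g' hg'0 hg'1 hg'2 v
      rw [hx, hy]
      have ma : coord (σ 0) v = a ↔ v ∈ block W (σ 0) a := ⟨fun h => ⟨hv, h⟩, fun h => h.2⟩
      have mb : coord (σ 0) v = b ↔ v ∈ block W (σ 0) b := ⟨fun h => ⟨hv, h⟩, fun h => h.2⟩
      have mc : coord (σ 1) v = c ↔ v ∈ block W (σ 1) c := ⟨fun h => ⟨hv, h⟩, fun h => h.2⟩
      have md : coord (σ 2) v = d ↔ v ∈ block W (σ 2) d := ⟨fun h => ⟨hv, h⟩, fun h => h.2⟩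
      rw [ma, mb, mc, md, hBa, hBb, hBc, hBd]
      simp only [Set.mem_insert_iff, Set.mem_singleton_iff]
      constructor
      · rintro ((h | h) | h | h)
        · exact Or.inr (Or.inr (Or.inl h))
        · exact Or.inr (Or.inl (Or.inl h))
        · exact Or.inr (Or.inl h)
        · exact Or.inr (Or.inr h)
      · rintro ((h | h) | h | h)
        · exact Or.inr (Or.inl (Or.inr h))
        · exact Or.inr (Or.inr (Or.inr h))
        · exact Or.inr (Or.inl h)
        · exact Or.inr (Or.inr h)
    · constructor
      · rintro (he | he | he)
        · exact absurd he (hglast 0)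
        · exact absurd he (hglast 1)
        · exact absurd he (hglast 2)
      · rintro (he | he | he)
        · exact absurd he (hg'last 0)
        · exact absurd he (hg'last 1)
        · exact absurd he (hg'last 2)

end F1Pair

-- ========== distance lemmas ==========

lemma adj_iff_not_share {m : ℕ} (x w : Fin m × Fin m × Fin m) :
    (HG3 m).Adj x w ↔ ¬ share x w := by
  unfold share HG3; push_neg; rfl

lemma exists_ne_ne {m : ℕ} (hm : 3 ≤ m) (a b : Fin m) : ∃ c : Fin m, c ≠ a ∧ c ≠ b := by
  by_contra h
  push_neg at h
  have hsub : (Finset.univ : Finset (Fin m)) ⊆ {a, b} := by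
    intro c _
    rcases eq_or_ne c a with rfl | hca
    · simp
    · simp [h c hca]
  have := Finset.card_le_card hsub
  have hle : ({a, b} : Finset (Fin m)).card ≤ 2 := Finset.card_insert_le _ _ |>.trans (by simp)
  simp [Finset.card_univ] at this
  omega

lemma dist_of_nonadj {m : ℕ} (hm : 3 ≤ m) {x y : Fin m × Fin m × Fin m} (hxy : x ≠ y)
    (h : ¬ (HG3 m).Adj x y) : (HG3 m).dist x y = 2 := by
  obtain ⟨c1, hc1x, hc1y⟩ := exists_ne_ne hm x.1 y.1
  obtain ⟨c2, hc2x, hc2y⟩ := exists_ne_ne hm x.2.1 y.2.1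
  obtain ⟨c3, hc3x, hc3y⟩ := exists_ne_ne hm x.2.2 y.2.2
  set z : Fin m × Fin m × Fin m := (c1, c2, c3) with hz
  have hxz : (HG3 m).Adj x z := ⟨hc1x.symm, hc2x.symm, hc3x.symm⟩
  have hzy : (HG3 m).Adj z y := ⟨hc1y, hc2y, hc3y⟩
  have hwalk : (HG3 m).dist x y ≤ 2 := by
    have := SimpleGraph.dist_le (SimpleGraph.Walk.cons hxz (SimpleGraph.Walk.cons hzy SimpleGraph.Walk.nil))
    simpa using this
  have hreach : (HG3 m).Reachable x y :=
    ⟨SimpleGraph.Walk.cons hxz (SimpleGraph.Walk.cons hzy SimpleGraph.Walk.nil)⟩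
  have hpos : 0 < (HG3 m).dist x y := hreach.pos_dist_of_ne hxy
  have hne1 : (HG3 m).dist x y ≠ 1 := fun h1 => h (SimpleGraph.dist_eq_one_iff_adj.1 h1)
  omega

lemma dist_eq_iff_share_iff {m : ℕ} (hm : 3 ≤ m) {x y w : Fin m × Fin m × Fin m}
    (hxw : x ≠ w) (hyw : y ≠ w) :
    (HG3 m).dist x w = (HG3 m).dist y w ↔ (share x w ↔ share y w) := by
  by_cases hx : share x w <;> by_cases hy : share y w
  · have dx : (HG3 m).dist x w = 2 :=
      dist_of_nonadj hm hxw (by rw [adj_iff_not_share]; exact not_not_intro hx)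
    have dy : (HG3 m).dist y w = 2 :=
      dist_of_nonadj hm hyw (by rw [adj_iff_not_share]; exact not_not_intro hy)
    simp [dx, dy, hx, hy]
  · have dx : (HG3 m).dist x w = 2 :=
      dist_of_nonadj hm hxw (by rw [adj_iff_not_share]; exact not_not_intro hx)
    have dy : (HG3 m).dist y w = 1 :=
      SimpleGraph.dist_eq_one_iff_adj.2 ((adj_iff_not_share y w).2 hy)
    simp [dx, dy, hx, hy]
  · have dx : (HG3 m).dist x w = 1 :=
      SimpleGraph.dist_eq_one_iff_adj.2 ((adj_iff_not_share x w).2 hx)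
    have dy : (HG3 m).dist y w = 2 :=
      dist_of_nonadj hm hyw (by rw [adj_iff_not_share]; exact not_not_intro hy)
    simp [dx, dy, hx, hy]
  · have dx : (HG3 m).dist x w = 1 :=
      SimpleGraph.dist_eq_one_iff_adj.2 ((adj_iff_not_share x w).2 hx)
    have dy : (HG3 m).dist y w = 1 :=
      SimpleGraph.dist_eq_one_iff_adj.2 ((adj_iff_not_share y w).2 hy)
    simp [dx, dy, hx, hy]


-- ========== final assembly ==========

lemma pair_of_forbidden {n : ℕ} {W : Set (Fin n × Fin n × Fin n)} (hW : TwoBasic W)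
    (h : HasF1 W ∨ HasF2 W ∨ HasF3 W) :
    ∃ x y : Fin (n+1) × Fin (n+1) × Fin (n+1), x ∉ Wext W ∧ y ∉ Wext W ∧ x ≠ y ∧
      ∀ w ∈ Wext W, (share x w ↔ share y w) := by
  rcases h with h | h | h
  · exact unres_F1 hW h
  · exact unres_F2 hW h
  · exact unres_F3 hW h


/-- `W'` version of `IsResolving` lives at size `n+1` automatically. -/
theorem stmt9 (n : ℕ) (hn : 3 ≤ n) (W : Set (Fin n × Fin n × Fin n))
    (hW : TwoBasic W) :
    IsResolving
      ((fun w : Fin n × Fin n × Fin n =>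
          ((w.1.castSucc, w.2.1.castSucc, w.2.2.castSucc) :
            Fin (n+1) × Fin (n+1) × Fin (n+1))) '' W
        ∪ {(Fin.last n, Fin.last n, Fin.last n)}) ↔
    ¬ HasF1 W ∧ ¬ HasF2 W ∧ ¬ HasF3 W := by
  have hm : 3 ≤ n + 1 := by omega
  have hWeq : ((fun w : Fin n × Fin n × Fin n =>
          ((w.1.castSucc, w.2.1.castSucc, w.2.2.castSucc) :
            Fin (n+1) × Fin (n+1) × Fin (n+1))) '' W
        ∪ {(Fin.last n, Fin.last n, Fin.last n)}) = Wext W := rfl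
  rw [hWeq]
  constructor
  · intro hres
    by_contra h
    have h' : HasF1 W ∨ HasF2 W ∨ HasF3 W := by tauto
    obtain ⟨x, y, hx, hy, hxy, hsh⟩ := pair_of_forbidden hW h'
    obtain ⟨w, hw, hdw⟩ := hres x y hx hy hxy
    exact hdw ((dist_eq_iff_share_iff hm (fun he : x = w => hx (he ▸ hw))
      (fun he : y = w => hy (he ▸ hw))).2 (hsh w hw))
  · rintro ⟨h1, h2, h3⟩ x y hx hy hxy
    by_contra hcon
    push_neg at hcon
    have hsh : ∀ w ∈ Wext W, (share x w ↔ share y w) := fun w hw =>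
      (dist_eq_iff_share_iff hm (fun he : x = w => hx (he ▸ hw))
        (fun he : y = w => hy (he ▸ hw))).1 (hcon w hw)
    rcases forbidden_of_unresolved hW hx hy hxy hsh with h | h | h
    · exact h1 h
    · exact h2 h
    · exact h3 h
end
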